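/- The element z_{r,s} := Σ_{1 ≤ a < b ≤ r+s} (a b)‾, where (a b)‾ = flip_{r,s}((a b)) if a,b are on the same side of the wall and (a b)‾ = −flip_{r,s}((a b)) if they are on opposite sides, is central in the walled Brauer algebra B_{r,s}(δ). -/

import Mathlib

open scoped Classical

/-- Vertices of a diagram on `n` strands: `(true, i)` is the `i`-th vertex on
the top edge, `(false, i)` the `i`-th vertex on the bottom edge. -/
abbrev WBVertex (n : ℕ) := Bool × Fin n

/-- `d` is a walled Brauer diagram with the wall separating the first `r`
positions from the last `s`. -/
def IsWalledBrauerDiagram (r s : ℕ) (d : WBVertex (r + s) → WBVertex (r + s)) : Prop :=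
  (∀ v, d (d v) = v) ∧ (∀ v, d v ≠ v) ∧
  ∀ (b : Bool) (i : Fin (r + s)),
    ((d (b, i)).1 ≠ b → (((d (b, i)).2 : ℕ) < r ↔ (i : ℕ) < r)) ∧
    ((d (b, i)).1 = b → ¬(((d (b, i)).2 : ℕ) < r ↔ (i : ℕ) < r))

/-- The perfect matching underlying the permutation diagram of `σ`: the `a`-th
top vertex is joined to the `σ(a)`-th bottom vertex. -/
def permMatching (n : ℕ) (σ : Equiv.Perm (Fin n)) : WBVertex n → WBVertex n
  | (true, i) => (false, σ i)
  | (false, i) => (true, σ.symm i)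

/-- Flipping (top ↔ bottom) the vertices lying strictly to the right of the
wall, i.e. at positions `≥ r` (`0`-indexed). -/
def wallFlip (r n : ℕ) (v : WBVertex n) : WBVertex n :=
  if (v.2 : ℕ) < r then v else (!v.1, v.2)

/-- The map `flip_{r,s}` sending a permutation diagram to the walled Brauer
diagram obtained by flipping the part of the diagram right of the wall. -/
def flipMap (r s : ℕ) (σ : Equiv.Perm (Fin (r + s))) :
    WBVertex (r + s) → WBVertex (r + s) :=
  wallFlip r (r + s) ∘ permMatching (r + s) σ ∘ wallFlip r (r + s)

/-- The doubled vertex set used when concatenating a diagram `f` (placed at the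
bottom, left summand) under a diagram `g` (placed on top, right summand). -/
abbrev WBDouble (n : ℕ) := WBVertex n ⊕ WBVertex n

/-- Apply `f` on the bottom diagram's vertices and `g` on the top diagram's. -/
def stackMap (n : ℕ) (f g : WBVertex n → WBVertex n) : WBDouble n → WBDouble n :=
  Sum.map f g

/-- Identify the top edge of the bottom diagram with the bottom edge of the top
diagram. -/
def glueMap (n : ℕ) : WBDouble n → WBDouble n
  | Sum.inl (true, i) => Sum.inr (false, i)
  | Sum.inr (false, i) => Sum.inl (true, i)
  | v => v

/-- Outer vertices of the concatenation: the bottom edge of the bottom diagram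
and the top edge of the top diagram. -/
def IsOuter (n : ℕ) : WBDouble n → Prop
  | Sum.inl (false, _) => True
  | Sum.inr (true, _) => True
  | _ => False

def forgetLevel (n : ℕ) : WBDouble n → WBVertex n
  | Sum.inl v => v
  | Sum.inr v => v

/-- The concatenation "`f` under `g`" of two diagrams: from an outer vertex,
follow the strand through the middle until the first outer vertex is reached. -/
noncomputable def compDiagram (n : ℕ) (f g : WBVertex n → WBVertex n) :
    WBVertex n → WBVertex n := fun v =>
  let start : WBDouble n := if v.1 = true then Sum.inr v else Sum.inl v
  let seq : ℕ → WBDouble n := fun k =>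
    (fun w => stackMap n f g (glueMap n w))^[k] (stackMap n f g start)
  forgetLevel n (seq (if h : ∃ k, IsOuter n (seq k) then Nat.find h else 0))

/-- The graph on the middle vertices of the concatenation "`f` under `g`" whose
edges are the top horizontal strands of `f` and the bottom horizontal strands
of `g`. -/
def middleGraph (n : ℕ) (f g : WBVertex n → WBVertex n) : SimpleGraph (Fin n) where
  Adj i j := i ≠ j ∧ (f (true, i) = (true, j) ∨ f (true, j) = (true, i) ∨
    g (false, i) = (false, j) ∨ g (false, j) = (false, i))
  symm := by
    constructor
    intro i j h
    exact ⟨Ne.symm h.1, by tauto⟩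
  loopless := by
    constructor
    intro i h
    exact h.1 rfl

/-- The middle point `i` lies on strands staying in the middle on both sides. -/
def closedAt (n : ℕ) (f g : WBVertex n → WBVertex n) (i : Fin n) : Prop :=
  (f (true, i)).1 = true ∧ (g (false, i)).1 = false

/-- The number of internal circles removed when concatenating `f` under `g`:
the number of connected components of the middle graph all of whose vertices
are closed. -/
noncomputable def circlesCount (n : ℕ) (f g : WBVertex n → WBVertex n) : ℕ :=
  Nat.card {c : (middleGraph n f g).ConnectedComponent //
    ∀ i : Fin n, (middleGraph n f g).connectedComponentMk i = c → closedAt n f g i}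

/-- The multiplication of the walled Brauer algebra `B_{r,s}(δ)` (extended to
the free `ℂ`-module on all maps): on basis diagrams, `σ · τ` is obtained by
putting `σ` under `τ`, removing internal circles, and multiplying by `δ^t`
where `t` is the number of circles removed. -/
noncomputable def wbMul (n : ℕ) (δ : ℂ) (x y : (WBVertex n → WBVertex n) →₀ ℂ) :
    (WBVertex n → WBVertex n) →₀ ℂ :=
  x.sum fun f a => y.sum fun g b =>
    (a * b * δ ^ circlesCount n f g) • Finsupp.single (compDiagram n f g) (1 : ℂ)

/-- The element `z_{r,s} = Σ_{a<b} (a b)‾` of the walled Brauer algebra, where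
`(a b)‾ = flip_{r,s}((a b))` if `a, b` are on the same side of the wall and
`(a b)‾ = −flip_{r,s}((a b))` if they are on opposite sides. -/
noncomputable def zElt (r s : ℕ) : (WBVertex (r + s) → WBVertex (r + s)) →₀ ℂ :=
  ∑ p : Fin (r + s) × Fin (r + s),
    if p.1 < p.2 then
      (if ((p.1 : ℕ) < r ↔ (p.2 : ℕ) < r) then (1 : ℂ) else -1) •
        Finsupp.single (flipMap r s (Equiv.swap p.1 p.2)) (1 : ℂ)
    else 0

section Aux

variable {n : ℕ}

@[simp] lemma glue_lt (i : Fin n) : glueMap n (Sum.inl (true, i)) = Sum.inr (false, i) := rfl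
@[simp] lemma glue_rf (i : Fin n) : glueMap n (Sum.inr (false, i)) = Sum.inl (true, i) := rfl
@[simp] lemma glue_lf (i : Fin n) : glueMap n (Sum.inl (false, i)) = Sum.inl (false, i) := rfl
@[simp] lemma glue_rt (i : Fin n) : glueMap n (Sum.inr (true, i)) = Sum.inr (true, i) := rfl

@[simp] lemma stack_inl (f g : WBVertex n → WBVertex n) (v : WBVertex n) :
    stackMap n f g (Sum.inl v) = Sum.inl (f v) := rfl
@[simp] lemma stack_inr (f g : WBVertex n → WBVertex n) (v : WBVertex n) :
    stackMap n f g (Sum.inr v) = Sum.inr (g v) := rfl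

@[simp] lemma isOuter_lf (i : Fin n) : IsOuter n (Sum.inl (false, i)) := trivial
@[simp] lemma isOuter_rt (i : Fin n) : IsOuter n (Sum.inr (true, i)) := trivial
@[simp] lemma not_isOuter_lt (i : Fin n) : ¬ IsOuter n (Sum.inl (true, i)) := fun h => h
@[simp] lemma not_isOuter_rf (i : Fin n) : ¬ IsOuter n (Sum.inr (false, i)) := fun h => h

@[simp] lemma forget_inl (v : WBVertex n) : forgetLevel n (Sum.inl v) = v := rfl
@[simp] lemma forget_inr (v : WBVertex n) : forgetLevel n (Sum.inr v) = v := rfl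

/-- The walk sequence used in `compDiagram`. -/
def walkSeq (n : ℕ) (f g : WBVertex n → WBVertex n) (v : WBVertex n) (k : ℕ) : WBDouble n :=
  (fun w => stackMap n f g (glueMap n w))^[k]
    (stackMap n f g (if v.1 = true then Sum.inr v else Sum.inl v))

@[simp] lemma walkSeq_zero_t (f g : WBVertex n → WBVertex n) (i : Fin n) :
    walkSeq n f g (true, i) 0 = Sum.inr (g (true, i)) := rfl

@[simp] lemma walkSeq_zero_f (f g : WBVertex n → WBVertex n) (i : Fin n) :
    walkSeq n f g (false, i) 0 = Sum.inl (f (false, i)) := rfl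

lemma walkSeq_succ (f g : WBVertex n → WBVertex n) (v : WBVertex n) (k : ℕ) :
    walkSeq n f g v (k + 1) = stackMap n f g (glueMap n (walkSeq n f g v k)) :=
  Function.iterate_succ_apply' _ _ _

lemma compDiagram_eq (f g : WBVertex n → WBVertex n) (v : WBVertex n) (k : ℕ)
    (h1 : IsOuter n (walkSeq n f g v k))
    (h2 : ∀ j, j < k → ¬ IsOuter n (walkSeq n f g v j)) :
    compDiagram n f g v = forgetLevel n (walkSeq n f g v k) := by
  have hex : ∃ m, IsOuter n (walkSeq n f g v m) := ⟨k, h1⟩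
  have hfind : Nat.find hex = k := by
    rw [Nat.find_eq_iff]
    exact ⟨h1, h2⟩
  unfold compDiagram
  simp only [show ∀ m, (fun w => stackMap n f g (glueMap n w))^[m]
      (stackMap n f g (if v.1 = true then Sum.inr v else Sum.inl v)) = walkSeq n f g v m
    from fun _ => rfl]
  rw [dif_pos hex, hfind]

end Aux
section FlipVals

variable {r s : ℕ}

lemma swap_side {a b i : Fin (r + s)} (hs : ((a : ℕ) < r ↔ (b : ℕ) < r)) :
    ((Equiv.swap a b i : ℕ) < r ↔ (i : ℕ) < r) := by
  rcases eq_or_ne i a with rfl | hia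
  · rw [Equiv.swap_apply_left]; exact hs.symm
  rcases eq_or_ne i b with rfl | hib
  · rw [Equiv.swap_apply_right]; exact hs
  · rw [Equiv.swap_apply_of_ne_of_ne hia hib]

lemma flip_same_t {a b : Fin (r + s)} (hs : ((a : ℕ) < r ↔ (b : ℕ) < r)) (i : Fin (r + s)) :
    flipMap r s (Equiv.swap a b) (true, i) = (false, Equiv.swap a b i) := by
  unfold flipMap wallFlip
  by_cases hi : (i : ℕ) < r
  · simp only [Function.comp_apply, if_pos hi]
    show (if ((permMatching (r+s) (Equiv.swap a b) (true, i)).2 : ℕ) < r then _ else _) = _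
    rw [show permMatching (r+s) (Equiv.swap a b) (true, i) = (false, Equiv.swap a b i) from rfl]
    simp only [if_pos ((swap_side hs).mpr hi)]
  · simp only [Function.comp_apply, if_neg hi]
    show (if ((permMatching (r+s) (Equiv.swap a b) (!true, i)).2 : ℕ) < r then _ else _) = _
    rw [show permMatching (r+s) (Equiv.swap a b) (!true, i)
        = (true, (Equiv.swap a b).symm i) from rfl, Equiv.symm_swap]
    simp [if_neg (fun h => hi ((swap_side hs).mp h))]

lemma flip_same_f {a b : Fin (r + s)} (hs : ((a : ℕ) < r ↔ (b : ℕ) < r)) (i : Fin (r + s)) :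
    flipMap r s (Equiv.swap a b) (false, i) = (true, Equiv.swap a b i) := by
  unfold flipMap wallFlip
  by_cases hi : (i : ℕ) < r
  · simp only [Function.comp_apply, if_pos hi]
    show (if ((permMatching (r+s) (Equiv.swap a b) (false, i)).2 : ℕ) < r then _ else _) = _
    rw [show permMatching (r+s) (Equiv.swap a b) (false, i)
        = (true, (Equiv.swap a b).symm i) from rfl, Equiv.symm_swap]
    simp only [if_pos ((swap_side hs).mpr hi)]
  · simp only [Function.comp_apply, if_neg hi]
    show (if ((permMatching (r+s) (Equiv.swap a b) (!false, i)).2 : ℕ) < r then _ else _) = _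
    rw [show permMatching (r+s) (Equiv.swap a b) (!false, i)
        = (false, Equiv.swap a b i) from rfl]
    simp [if_neg (fun h => hi ((swap_side hs).mp h))]

lemma flip_cross_t_fst {a b : Fin (r + s)} (hc : ¬((a : ℕ) < r ↔ (b : ℕ) < r)) :
    flipMap r s (Equiv.swap a b) (true, a) = (true, b) := by
  unfold flipMap wallFlip
  by_cases ha : (a : ℕ) < r
  · have hb : ¬ (b : ℕ) < r := fun h => hc ⟨fun _ => h, fun _ => ha⟩
    simp only [Function.comp_apply, if_pos ha]
    show (if ((permMatching (r+s) (Equiv.swap a b) (true, a)).2 : ℕ) < r then _ else _) = _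
    rw [show permMatching (r+s) (Equiv.swap a b) (true, a)
        = (false, Equiv.swap a b a) from rfl, Equiv.swap_apply_left]
    simp [if_neg hb]
  · have hb : (b : ℕ) < r := by by_contra hb; exact hc ⟨fun h => absurd h ha, fun h => absurd h hb⟩
    simp only [Function.comp_apply, if_neg ha]
    show (if ((permMatching (r+s) (Equiv.swap a b) (!true, a)).2 : ℕ) < r then _ else _) = _
    rw [show permMatching (r+s) (Equiv.swap a b) (!true, a)
        = (true, (Equiv.swap a b).symm a) from rfl, Equiv.symm_swap, Equiv.swap_apply_left]
    simp [if_pos hb]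

lemma flip_cross_f_fst {a b : Fin (r + s)} (hc : ¬((a : ℕ) < r ↔ (b : ℕ) < r)) :
    flipMap r s (Equiv.swap a b) (false, a) = (false, b) := by
  unfold flipMap wallFlip
  by_cases ha : (a : ℕ) < r
  · have hb : ¬ (b : ℕ) < r := fun h => hc ⟨fun _ => h, fun _ => ha⟩
    simp only [Function.comp_apply, if_pos ha]
    show (if ((permMatching (r+s) (Equiv.swap a b) (false, a)).2 : ℕ) < r then _ else _) = _
    rw [show permMatching (r+s) (Equiv.swap a b) (false, a)
        = (true, (Equiv.swap a b).symm a) from rfl, Equiv.symm_swap, Equiv.swap_apply_left]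
    simp [if_neg hb]
  · have hb : (b : ℕ) < r := by by_contra hb; exact hc ⟨fun h => absurd h ha, fun h => absurd h hb⟩
    simp only [Function.comp_apply, if_neg ha]
    show (if ((permMatching (r+s) (Equiv.swap a b) (!false, a)).2 : ℕ) < r then _ else _) = _
    rw [show permMatching (r+s) (Equiv.swap a b) (!false, a)
        = (false, Equiv.swap a b a) from rfl, Equiv.swap_apply_left]
    simp [if_pos hb]

lemma flip_cross_t_snd {a b : Fin (r + s)} (hc : ¬((a : ℕ) < r ↔ (b : ℕ) < r)) :
    flipMap r s (Equiv.swap a b) (true, b) = (true, a) := by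
  rw [Equiv.swap_comm]; exact flip_cross_t_fst (fun h => hc h.symm)

lemma flip_cross_f_snd {a b : Fin (r + s)} (hc : ¬((a : ℕ) < r ↔ (b : ℕ) < r)) :
    flipMap r s (Equiv.swap a b) (false, b) = (false, a) := by
  rw [Equiv.swap_comm]; exact flip_cross_f_fst (fun h => hc h.symm)

lemma flip_cross_t_other {a b i : Fin (r + s)} (hia : i ≠ a) (hib : i ≠ b) :
    flipMap r s (Equiv.swap a b) (true, i) = (false, i) := by
  unfold flipMap wallFlip
  by_cases hi : (i : ℕ) < r
  · simp only [Function.comp_apply, if_pos hi]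
    show (if ((permMatching (r+s) (Equiv.swap a b) (true, i)).2 : ℕ) < r then _ else _) = _
    rw [show permMatching (r+s) (Equiv.swap a b) (true, i)
        = (false, Equiv.swap a b i) from rfl, Equiv.swap_apply_of_ne_of_ne hia hib]
    simp [if_pos hi]
  · simp only [Function.comp_apply, if_neg hi]
    show (if ((permMatching (r+s) (Equiv.swap a b) (!true, i)).2 : ℕ) < r then _ else _) = _
    rw [show permMatching (r+s) (Equiv.swap a b) (!true, i)
        = (true, (Equiv.swap a b).symm i) from rfl, Equiv.symm_swap,
      Equiv.swap_apply_of_ne_of_ne hia hib]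
    simp [if_neg hi]

lemma flip_cross_f_other {a b i : Fin (r + s)} (hia : i ≠ a) (hib : i ≠ b) :
    flipMap r s (Equiv.swap a b) (false, i) = (true, i) := by
  unfold flipMap wallFlip
  by_cases hi : (i : ℕ) < r
  · simp only [Function.comp_apply, if_pos hi]
    show (if ((permMatching (r+s) (Equiv.swap a b) (false, i)).2 : ℕ) < r then _ else _) = _
    rw [show permMatching (r+s) (Equiv.swap a b) (false, i)
        = (true, (Equiv.swap a b).symm i) from rfl, Equiv.symm_swap,
      Equiv.swap_apply_of_ne_of_ne hia hib]
    simp [if_pos hi]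
  · simp only [Function.comp_apply, if_neg hi]
    show (if ((permMatching (r+s) (Equiv.swap a b) (!false, i)).2 : ℕ) < r then _ else _) = _
    rw [show permMatching (r+s) (Equiv.swap a b) (!false, i)
        = (false, Equiv.swap a b i) from rfl, Equiv.swap_apply_of_ne_of_ne hia hib]
    simp [if_neg hi]

end FlipVals
section Surg

variable {n : ℕ}

/-- Swap two bottom positions. -/
def bswapV {n : ℕ} (a b : Fin n) : WBVertex n → WBVertex n
  | (false, i) => (false, Equiv.swap a b i)
  | v => v

/-- Swap two top positions. -/
def tswapV {n : ℕ} (a b : Fin n) : WBVertex n → WBVertex n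
  | (true, i) => (true, Equiv.swap a b i)
  | v => v

@[simp] lemma bswapV_f (a b i : Fin n) : bswapV a b (false, i) = (false, Equiv.swap a b i) := rfl
@[simp] lemma bswapV_t (a b i : Fin n) : bswapV a b (true, i) = (true, i) := rfl
@[simp] lemma tswapV_t (a b i : Fin n) : tswapV a b (true, i) = (true, Equiv.swap a b i) := rfl
@[simp] lemma tswapV_f (a b i : Fin n) : tswapV a b (false, i) = (false, i) := rfl

/-- Surgery joining the bottom vertices `a, b` and their former partners. -/
def bsurg (n : ℕ) (a b : Fin n) (d : WBVertex n → WBVertex n) : WBVertex n → WBVertex n :=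
  fun v =>
    if v = (false, a) then (false, b)
    else if v = (false, b) then (false, a)
    else if d v = (false, a) then d (false, b)
    else if d v = (false, b) then d (false, a) else d v

/-- Surgery joining the top vertices `a, b` and their former partners. -/
def tsurg (n : ℕ) (a b : Fin n) (d : WBVertex n → WBVertex n) : WBVertex n → WBVertex n :=
  fun v =>
    if v = (true, a) then (true, b)
    else if v = (true, b) then (true, a)
    else if d v = (true, a) then d (true, b)
    else if d v = (true, b) then d (true, a) else d v

end Surg

section Walks

variable {r s : ℕ}

/-- Composing a same-side transposition under `d` relabels the bottom of `d`. -/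
lemma comp_sswap_left {a b : Fin (r + s)} (hs : ((a : ℕ) < r ↔ (b : ℕ) < r))
    (d : WBVertex (r + s) → WBVertex (r + s)) :
    compDiagram (r + s) (flipMap r s (Equiv.swap a b)) d
      = fun v => bswapV a b (d (bswapV a b v)) := by
  funext v
  obtain ⟨bv, i⟩ := v
  set f := flipMap r s (Equiv.swap a b) with hf
  cases bv
  case false =>
    have e0 : walkSeq (r + s) f d (false, i) 0 = Sum.inl (true, Equiv.swap a b i) := by
      rw [walkSeq_zero_f, hf, flip_same_f hs]
    have e1 : walkSeq (r + s) f d (false, i) 1 = Sum.inr (d (false, Equiv.swap a b i)) := by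
      rw [walkSeq_succ, e0]; rfl
    rcases hdi : d (false, Equiv.swap a b i) with ⟨c, j⟩
    cases c
    case true =>
      rw [compDiagram_eq f d _ 1 (by rw [e1, hdi]; simp)
        (by intro m hm; have hm0 : m = 0 := Nat.lt_one_iff.mp hm
            subst hm0; rw [e0]; simp)]
      rw [e1, hdi]
      simp [hdi]
    case false =>
      have e2 : walkSeq (r + s) f d (false, i) 2 = Sum.inl (false, Equiv.swap a b j) := by
        rw [walkSeq_succ, e1, hdi, glue_rf, stack_inl, hf, flip_same_t hs]
      rw [compDiagram_eq f d _ 2 (by rw [e2]; simp)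
        (by intro m hm
            interval_cases m
            · rw [e0]; simp
            · rw [e1, hdi]; simp)]
      rw [e2]
      simp [hdi]
  case true =>
    have e0 : walkSeq (r + s) f d (true, i) 0 = Sum.inr (d (true, i)) := by
      rw [walkSeq_zero_t]
    rcases hdi : d (true, i) with ⟨c, j⟩
    cases c
    case true =>
      rw [compDiagram_eq f d _ 0 (by rw [e0, hdi]; simp) (by intro m hm; omega)]
      rw [e0, hdi]
      simp [hdi]
    case false =>
      have e1 : walkSeq (r + s) f d (true, i) 1 = Sum.inl (false, Equiv.swap a b j) := by
        rw [walkSeq_succ, e0, hdi, glue_rf, stack_inl, hf, flip_same_t hs]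
      rw [compDiagram_eq f d _ 1 (by rw [e1]; simp)
        (by intro m hm; have hm0 : m = 0 := Nat.lt_one_iff.mp hm
            subst hm0; rw [e0, hdi]; simp)]
      rw [e1]
      simp [hdi]

/-- Composing `d` under a same-side transposition relabels the top of `d`. -/
lemma comp_sswap_right {a b : Fin (r + s)} (hs : ((a : ℕ) < r ↔ (b : ℕ) < r))
    (d : WBVertex (r + s) → WBVertex (r + s)) :
    compDiagram (r + s) d (flipMap r s (Equiv.swap a b))
      = fun v => tswapV a b (d (tswapV a b v)) := by
  funext v
  obtain ⟨bv, i⟩ := v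
  set g := flipMap r s (Equiv.swap a b) with hg
  cases bv
  case true =>
    have e0 : walkSeq (r + s) d g (true, i) 0 = Sum.inr (false, Equiv.swap a b i) := by
      rw [walkSeq_zero_t, hg, flip_same_t hs]
    have e1 : walkSeq (r + s) d g (true, i) 1 = Sum.inl (d (true, Equiv.swap a b i)) := by
      rw [walkSeq_succ, e0]; rfl
    rcases hdi : d (true, Equiv.swap a b i) with ⟨c, j⟩
    cases c
    case false =>
      rw [compDiagram_eq d g _ 1 (by rw [e1, hdi]; simp)
        (by intro m hm; have hm0 : m = 0 := Nat.lt_one_iff.mp hm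
            subst hm0; rw [e0]; simp)]
      rw [e1, hdi]
      simp [hdi]
    case true =>
      have e2 : walkSeq (r + s) d g (true, i) 2 = Sum.inr (true, Equiv.swap a b j) := by
        rw [walkSeq_succ, e1, hdi, glue_lt, stack_inr, hg, flip_same_f hs]
      rw [compDiagram_eq d g _ 2 (by rw [e2]; simp)
        (by intro m hm
            interval_cases m
            · rw [e0]; simp
            · rw [e1, hdi]; simp)]
      rw [e2]
      simp [hdi]
  case false =>
    have e0 : walkSeq (r + s) d g (false, i) 0 = Sum.inl (d (false, i)) := by
      rw [walkSeq_zero_f]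
    rcases hdi : d (false, i) with ⟨c, j⟩
    cases c
    case false =>
      rw [compDiagram_eq d g _ 0 (by rw [e0, hdi]; simp) (by intro m hm; omega)]
      rw [e0, hdi]
      simp [hdi]
    case true =>
      have e1 : walkSeq (r + s) d g (false, i) 1 = Sum.inr (true, Equiv.swap a b j) := by
        rw [walkSeq_succ, e0, hdi, glue_lt, stack_inr, hg, flip_same_f hs]
      rw [compDiagram_eq d g _ 1 (by rw [e1]; simp)
        (by intro m hm; have hm0 : m = 0 := Nat.lt_one_iff.mp hm
            subst hm0; rw [e0, hdi]; simp)]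
      rw [e1]
      simp [hdi]

end Walks
section WalksCross

variable {r s : ℕ}

/-- Composing a cross contraction under `d` performs surgery on the bottom of `d`. -/
lemma comp_cross_left {a b : Fin (r + s)} (hc : ¬((a : ℕ) < r ↔ (b : ℕ) < r))
    {d : WBVertex (r + s) → WBVertex (r + s)}
    (hinv : ∀ v, d (d v) = v) (hne : ∀ v, d v ≠ v) :
    compDiagram (r + s) (flipMap r s (Equiv.swap a b)) d = bsurg (r + s) a b d := by
  have hab : a ≠ b := fun h => hc (by rw [h])
  have hba : b ≠ a := fun h => hab h.symm
  funext v
  obtain ⟨bv, i⟩ := v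
  set f := flipMap r s (Equiv.swap a b) with hf
  cases bv
  · -- false
    by_cases hia : i = a
    · subst hia
      have e0 : walkSeq (r + s) f d (false, i) 0 = Sum.inl (false, b) := by
        rw [walkSeq_zero_f, hf, flip_cross_f_fst hc]
      rw [compDiagram_eq f d _ 0 (by rw [e0]; simp) (by intro m hm; omega)]
      rw [e0]
      simp [bsurg]
    by_cases hib : i = b
    · subst hib
      have e0 : walkSeq (r + s) f d (false, i) 0 = Sum.inl (false, a) := by
        rw [walkSeq_zero_f, hf, flip_cross_f_snd hc]
      rw [compDiagram_eq f d _ 0 (by rw [e0]; simp) (by intro m hm; omega)]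
      rw [e0]
      simp [bsurg, hba]
    have e0 : walkSeq (r + s) f d (false, i) 0 = Sum.inl (true, i) := by
      rw [walkSeq_zero_f, hf, flip_cross_f_other hia hib]
    have e1 : walkSeq (r + s) f d (false, i) 1 = Sum.inr (d (false, i)) := by
      rw [walkSeq_succ, e0]; rfl
    rcases hdi : d (false, i) with ⟨c, j⟩
    cases c
    · -- false
      by_cases hja : j = a
      · rw [hja] at hdi
        have hda : d (false, a) = (false, i) := by rw [← hdi, hinv]
        have e2 : walkSeq (r + s) f d (false, i) 2 = Sum.inl (true, b) := by
          rw [walkSeq_succ, e1, hdi, glue_rf, stack_inl, hf, flip_cross_t_fst hc]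
        have e3 : walkSeq (r + s) f d (false, i) 3 = Sum.inr (d (false, b)) := by
          rw [walkSeq_succ, e2]; rfl
        rcases hdb : d (false, b) with ⟨c2, k2⟩
        cases c2
        · -- false
          have hk2b : k2 ≠ b := fun h => hne (false, b) (by rw [hdb, h])
          have hk2a : k2 ≠ a := by
            intro h
            rw [h] at hdb
            have h2 : d (false, a) = (false, b) := by rw [← hdb, hinv]
            rw [hda] at h2
            simp at h2
            exact hib h2
          have e4 : walkSeq (r + s) f d (false, i) 4 = Sum.inl (false, k2) := by
            rw [walkSeq_succ, e3, hdb, glue_rf, stack_inl, hf, flip_cross_t_other hk2a hk2b]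
          rw [compDiagram_eq f d _ 4 (by rw [e4]; simp)
            (by intro m hm
                interval_cases m
                · rw [e0]; simp
                · rw [e1, hdi]; simp
                · rw [e2]; simp
                · rw [e3, hdb]; simp)]
          rw [e4]
          simp [bsurg, hdi, hdb, hia, hib]
        · -- true
          rw [compDiagram_eq f d _ 3 (by rw [e3, hdb]; simp)
            (by intro m hm
                interval_cases m
                · rw [e0]; simp
                · rw [e1, hdi]; simp
                · rw [e2]; simp)]
          rw [e3, hdb]
          simp [bsurg, hdi, hdb, hia, hib]
      by_cases hjb : j = b
      · rw [hjb] at hdi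
        have hdb : d (false, b) = (false, i) := by rw [← hdi, hinv]
        have e2 : walkSeq (r + s) f d (false, i) 2 = Sum.inl (true, a) := by
          rw [walkSeq_succ, e1, hdi, glue_rf, stack_inl, hf, flip_cross_t_snd hc]
        have e3 : walkSeq (r + s) f d (false, i) 3 = Sum.inr (d (false, a)) := by
          rw [walkSeq_succ, e2]; rfl
        rcases hda : d (false, a) with ⟨c2, k2⟩
        cases c2
        · -- false
          have hk2a : k2 ≠ a := fun h => hne (false, a) (by rw [hda, h])
          have hk2b : k2 ≠ b := by
            intro h
            rw [h] at hda
            have h2 : d (false, b) = (false, a) := by rw [← hda, hinv]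
            rw [hdb] at h2
            simp at h2
            exact hia h2
          have e4 : walkSeq (r + s) f d (false, i) 4 = Sum.inl (false, k2) := by
            rw [walkSeq_succ, e3, hda, glue_rf, stack_inl, hf, flip_cross_t_other hk2a hk2b]
          rw [compDiagram_eq f d _ 4 (by rw [e4]; simp)
            (by intro m hm
                interval_cases m
                · rw [e0]; simp
                · rw [e1, hdi]; simp
                · rw [e2]; simp
                · rw [e3, hda]; simp)]
          rw [e4]
          simp [bsurg, hdi, hda, hia, hib, hba]
        · -- true
          rw [compDiagram_eq f d _ 3 (by rw [e3, hda]; simp)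
            (by intro m hm
                interval_cases m
                · rw [e0]; simp
                · rw [e1, hdi]; simp
                · rw [e2]; simp)]
          rw [e3, hda]
          simp [bsurg, hdi, hda, hia, hib, hba]
      · have e2 : walkSeq (r + s) f d (false, i) 2 = Sum.inl (false, j) := by
          rw [walkSeq_succ, e1, hdi, glue_rf, stack_inl, hf, flip_cross_t_other hja hjb]
        rw [compDiagram_eq f d _ 2 (by rw [e2]; simp)
          (by intro m hm
              interval_cases m
              · rw [e0]; simp
              · rw [e1, hdi]; simp)]
        rw [e2]
        simp [bsurg, hdi, hia, hib, hja, hjb]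
    · -- true
      rw [compDiagram_eq f d _ 1 (by rw [e1, hdi]; simp)
        (by intro m hm; have hm0 : m = 0 := Nat.lt_one_iff.mp hm
            subst hm0; rw [e0]; simp)]
      rw [e1, hdi]
      simp [bsurg, hdi, hia, hib]
  · -- true
    have e0 : walkSeq (r + s) f d (true, i) 0 = Sum.inr (d (true, i)) := by
      rw [walkSeq_zero_t]
    rcases hdi : d (true, i) with ⟨c, j⟩
    cases c
    · -- false
      by_cases hja : j = a
      · rw [hja] at hdi
        have hda : d (false, a) = (true, i) := by rw [← hdi, hinv]
        have e1 : walkSeq (r + s) f d (true, i) 1 = Sum.inl (true, b) := by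
          rw [walkSeq_succ, e0, hdi, glue_rf, stack_inl, hf, flip_cross_t_fst hc]
        have e2 : walkSeq (r + s) f d (true, i) 2 = Sum.inr (d (false, b)) := by
          rw [walkSeq_succ, e1]; rfl
        rcases hdb : d (false, b) with ⟨c2, k2⟩
        cases c2
        · -- false
          have hk2b : k2 ≠ b := fun h => hne (false, b) (by rw [hdb, h])
          have hk2a : k2 ≠ a := by
            intro h
            rw [h] at hdb
            have h2 : d (false, a) = (false, b) := by rw [← hdb, hinv]
            rw [hda] at h2
            simp at h2
          have e3 : walkSeq (r + s) f d (true, i) 3 = Sum.inl (false, k2) := by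
            rw [walkSeq_succ, e2, hdb, glue_rf, stack_inl, hf, flip_cross_t_other hk2a hk2b]
          rw [compDiagram_eq f d _ 3 (by rw [e3]; simp)
            (by intro m hm
                interval_cases m
                · rw [e0, hdi]; simp
                · rw [e1]; simp
                · rw [e2, hdb]; simp)]
          rw [e3]
          simp [bsurg, hdi, hdb]
        · -- true
          rw [compDiagram_eq f d _ 2 (by rw [e2, hdb]; simp)
            (by intro m hm
                interval_cases m
                · rw [e0, hdi]; simp
                · rw [e1]; simp)]
          rw [e2, hdb]
          simp [bsurg, hdi, hdb]
      by_cases hjb : j = b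
      · rw [hjb] at hdi
        have hdb : d (false, b) = (true, i) := by rw [← hdi, hinv]
        have e1 : walkSeq (r + s) f d (true, i) 1 = Sum.inl (true, a) := by
          rw [walkSeq_succ, e0, hdi, glue_rf, stack_inl, hf, flip_cross_t_snd hc]
        have e2 : walkSeq (r + s) f d (true, i) 2 = Sum.inr (d (false, a)) := by
          rw [walkSeq_succ, e1]; rfl
        rcases hda : d (false, a) with ⟨c2, k2⟩
        cases c2
        · -- false
          have hk2a : k2 ≠ a := fun h => hne (false, a) (by rw [hda, h])
          have hk2b : k2 ≠ b := by
            intro h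
            rw [h] at hda
            have h2 : d (false, b) = (false, a) := by rw [← hda, hinv]
            rw [hdb] at h2
            simp at h2
          have e3 : walkSeq (r + s) f d (true, i) 3 = Sum.inl (false, k2) := by
            rw [walkSeq_succ, e2, hda, glue_rf, stack_inl, hf, flip_cross_t_other hk2a hk2b]
          rw [compDiagram_eq f d _ 3 (by rw [e3]; simp)
            (by intro m hm
                interval_cases m
                · rw [e0, hdi]; simp
                · rw [e1]; simp
                · rw [e2, hda]; simp)]
          rw [e3]
          simp [bsurg, hdi, hda, hba]
        · -- true
          rw [compDiagram_eq f d _ 2 (by rw [e2, hda]; simp)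
            (by intro m hm
                interval_cases m
                · rw [e0, hdi]; simp
                · rw [e1]; simp)]
          rw [e2, hda]
          simp [bsurg, hdi, hda, hba]
      · have e1 : walkSeq (r + s) f d (true, i) 1 = Sum.inl (false, j) := by
          rw [walkSeq_succ, e0, hdi, glue_rf, stack_inl, hf, flip_cross_t_other hja hjb]
        rw [compDiagram_eq f d _ 1 (by rw [e1]; simp)
          (by intro m hm; have hm0 : m = 0 := Nat.lt_one_iff.mp hm
              subst hm0; rw [e0, hdi]; simp)]
        rw [e1]
        simp [bsurg, hdi, hja, hjb]

    · -- true
      rw [compDiagram_eq f d _ 0 (by rw [e0, hdi]; simp) (by intro m hm; omega)]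
      rw [e0, hdi]
      simp [bsurg, hdi]
/-- Composing `d` under a cross contraction performs surgery on the top of `d`. -/
lemma comp_cross_right {a b : Fin (r + s)} (hc : ¬((a : ℕ) < r ↔ (b : ℕ) < r))
    {d : WBVertex (r + s) → WBVertex (r + s)}
    (hinv : ∀ v, d (d v) = v) (hne : ∀ v, d v ≠ v) :
    compDiagram (r + s) d (flipMap r s (Equiv.swap a b)) = tsurg (r + s) a b d := by
  have hab : a ≠ b := fun h => hc (by rw [h])
  have hba : b ≠ a := fun h => hab h.symm
  funext v
  obtain ⟨bv, i⟩ := v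
  set g := flipMap r s (Equiv.swap a b) with hg
  cases bv
  · -- false
    have e0 : walkSeq (r + s) d g (false, i) 0 = Sum.inl (d (false, i)) := by
      rw [walkSeq_zero_f]
    rcases hdi : d (false, i) with ⟨c, j⟩
    cases c
    · -- false
      rw [compDiagram_eq d g _ 0 (by rw [e0, hdi]; simp) (by intro m hm; omega)]
      rw [e0, hdi]
      simp [tsurg, hdi]
    · -- true
      by_cases hja : j = a
      · rw [hja] at hdi
        have hda : d (true, a) = (false, i) := by rw [← hdi, hinv]
        have e1 : walkSeq (r + s) d g (false, i) 1 = Sum.inr (false, b) := by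
          rw [walkSeq_succ, e0, hdi, glue_lt, stack_inr, hg, flip_cross_f_fst hc]
        have e2 : walkSeq (r + s) d g (false, i) 2 = Sum.inl (d (true, b)) := by
          rw [walkSeq_succ, e1]; rfl
        rcases hdb : d (true, b) with ⟨c2, k2⟩
        cases c2
        · -- false
          rw [compDiagram_eq d g _ 2 (by rw [e2, hdb]; simp)
            (by intro m hm
                interval_cases m
                · rw [e0, hdi]; simp
                · rw [e1]; simp)]
          rw [e2, hdb]
          simp [tsurg, hdi, hdb]
        · -- true
          have hk2b : k2 ≠ b := fun h => hne (true, b) (by rw [hdb, h])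
          have hk2a : k2 ≠ a := by
            intro h
            rw [h] at hdb
            have h2 : d (true, a) = (true, b) := by rw [← hdb, hinv]
            rw [hda] at h2
            simp at h2
          have e3 : walkSeq (r + s) d g (false, i) 3 = Sum.inr (true, k2) := by
            rw [walkSeq_succ, e2, hdb, glue_lt, stack_inr, hg, flip_cross_f_other hk2a hk2b]
          rw [compDiagram_eq d g _ 3 (by rw [e3]; simp)
            (by intro m hm
                interval_cases m
                · rw [e0, hdi]; simp
                · rw [e1]; simp
                · rw [e2, hdb]; simp)]
          rw [e3]
          simp [tsurg, hdi, hdb]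
      by_cases hjb : j = b
      · rw [hjb] at hdi
        have hdb : d (true, b) = (false, i) := by rw [← hdi, hinv]
        have e1 : walkSeq (r + s) d g (false, i) 1 = Sum.inr (false, a) := by
          rw [walkSeq_succ, e0, hdi, glue_lt, stack_inr, hg, flip_cross_f_snd hc]
        have e2 : walkSeq (r + s) d g (false, i) 2 = Sum.inl (d (true, a)) := by
          rw [walkSeq_succ, e1]; rfl
        rcases hda : d (true, a) with ⟨c2, k2⟩
        cases c2
        · -- false
          rw [compDiagram_eq d g _ 2 (by rw [e2, hda]; simp)
            (by intro m hm
                interval_cases m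
                · rw [e0, hdi]; simp
                · rw [e1]; simp)]
          rw [e2, hda]
          simp [tsurg, hdi, hda, hba]
        · -- true
          have hk2a : k2 ≠ a := fun h => hne (true, a) (by rw [hda, h])
          have hk2b : k2 ≠ b := by
            intro h
            rw [h] at hda
            have h2 : d (true, b) = (true, a) := by rw [← hda, hinv]
            rw [hdb] at h2
            simp at h2
          have e3 : walkSeq (r + s) d g (false, i) 3 = Sum.inr (true, k2) := by
            rw [walkSeq_succ, e2, hda, glue_lt, stack_inr, hg, flip_cross_f_other hk2a hk2b]
          rw [compDiagram_eq d g _ 3 (by rw [e3]; simp)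
            (by intro m hm
                interval_cases m
                · rw [e0, hdi]; simp
                · rw [e1]; simp
                · rw [e2, hda]; simp)]
          rw [e3]
          simp [tsurg, hdi, hda, hba]
      · have e1 : walkSeq (r + s) d g (false, i) 1 = Sum.inr (true, j) := by
          rw [walkSeq_succ, e0, hdi, glue_lt, stack_inr, hg, flip_cross_f_other hja hjb]
        rw [compDiagram_eq d g _ 1 (by rw [e1]; simp)
          (by intro m hm; have hm0 : m = 0 := Nat.lt_one_iff.mp hm
              subst hm0; rw [e0, hdi]; simp)]
        rw [e1]
        simp [tsurg, hdi, hja, hjb]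

  · -- true
    by_cases hia : i = a
    · subst hia
      have e0 : walkSeq (r + s) d g (true, i) 0 = Sum.inr (true, b) := by
        rw [walkSeq_zero_t, hg, flip_cross_t_fst hc]
      rw [compDiagram_eq d g _ 0 (by rw [e0]; simp) (by intro m hm; omega)]
      rw [e0]
      simp [tsurg]
    by_cases hib : i = b
    · subst hib
      have e0 : walkSeq (r + s) d g (true, i) 0 = Sum.inr (true, a) := by
        rw [walkSeq_zero_t, hg, flip_cross_t_snd hc]
      rw [compDiagram_eq d g _ 0 (by rw [e0]; simp) (by intro m hm; omega)]
      rw [e0]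
      simp [tsurg, hba]
    have e0 : walkSeq (r + s) d g (true, i) 0 = Sum.inr (false, i) := by
      rw [walkSeq_zero_t, hg, flip_cross_t_other hia hib]
    have e1 : walkSeq (r + s) d g (true, i) 1 = Sum.inl (d (true, i)) := by
      rw [walkSeq_succ, e0]; rfl
    rcases hdi : d (true, i) with ⟨c, j⟩
    cases c
    · -- false
      rw [compDiagram_eq d g _ 1 (by rw [e1, hdi]; simp)
        (by intro m hm; have hm0 : m = 0 := Nat.lt_one_iff.mp hm
            subst hm0; rw [e0]; simp)]
      rw [e1, hdi]
      simp [tsurg, hdi, hia, hib]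
    · -- true
      by_cases hja : j = a
      · rw [hja] at hdi
        have hda : d (true, a) = (true, i) := by rw [← hdi, hinv]
        have e2 : walkSeq (r + s) d g (true, i) 2 = Sum.inr (false, b) := by
          rw [walkSeq_succ, e1, hdi, glue_lt, stack_inr, hg, flip_cross_f_fst hc]
        have e3 : walkSeq (r + s) d g (true, i) 3 = Sum.inl (d (true, b)) := by
          rw [walkSeq_succ, e2]; rfl
        rcases hdb : d (true, b) with ⟨c2, k2⟩
        cases c2
        · -- false
          rw [compDiagram_eq d g _ 3 (by rw [e3, hdb]; simp)
            (by intro m hm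
                interval_cases m
                · rw [e0]; simp
                · rw [e1, hdi]; simp
                · rw [e2]; simp)]
          rw [e3, hdb]
          simp [tsurg, hdi, hdb, hia, hib]
        · -- true
          have hk2b : k2 ≠ b := fun h => hne (true, b) (by rw [hdb, h])
          have hk2a : k2 ≠ a := by
            intro h
            rw [h] at hdb
            have h2 : d (true, a) = (true, b) := by rw [← hdb, hinv]
            rw [hda] at h2
            simp at h2
            exact hib h2
          have e4 : walkSeq (r + s) d g (true, i) 4 = Sum.inr (true, k2) := by
            rw [walkSeq_succ, e3, hdb, glue_lt, stack_inr, hg, flip_cross_f_other hk2a hk2b]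
          rw [compDiagram_eq d g _ 4 (by rw [e4]; simp)
            (by intro m hm
                interval_cases m
                · rw [e0]; simp
                · rw [e1, hdi]; simp
                · rw [e2]; simp
                · rw [e3, hdb]; simp)]
          rw [e4]
          simp [tsurg, hdi, hdb, hia, hib]
      by_cases hjb : j = b
      · rw [hjb] at hdi
        have hdb : d (true, b) = (true, i) := by rw [← hdi, hinv]
        have e2 : walkSeq (r + s) d g (true, i) 2 = Sum.inr (false, a) := by
          rw [walkSeq_succ, e1, hdi, glue_lt, stack_inr, hg, flip_cross_f_snd hc]
        have e3 : walkSeq (r + s) d g (true, i) 3 = Sum.inl (d (true, a)) := by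
          rw [walkSeq_succ, e2]; rfl
        rcases hda : d (true, a) with ⟨c2, k2⟩
        cases c2
        · -- false
          rw [compDiagram_eq d g _ 3 (by rw [e3, hda]; simp)
            (by intro m hm
                interval_cases m
                · rw [e0]; simp
                · rw [e1, hdi]; simp
                · rw [e2]; simp)]
          rw [e3, hda]
          simp [tsurg, hdi, hda, hia, hib, hba]
        · -- true
          have hk2a : k2 ≠ a := fun h => hne (true, a) (by rw [hda, h])
          have hk2b : k2 ≠ b := by
            intro h
            rw [h] at hda
            have h2 : d (true, b) = (true, a) := by rw [← hda, hinv]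
            rw [hdb] at h2
            simp at h2
            exact hia h2
          have e4 : walkSeq (r + s) d g (true, i) 4 = Sum.inr (true, k2) := by
            rw [walkSeq_succ, e3, hda, glue_lt, stack_inr, hg, flip_cross_f_other hk2a hk2b]
          rw [compDiagram_eq d g _ 4 (by rw [e4]; simp)
            (by intro m hm
                interval_cases m
                · rw [e0]; simp
                · rw [e1, hdi]; simp
                · rw [e2]; simp
                · rw [e3, hda]; simp)]
          rw [e4]
          simp [tsurg, hdi, hda, hia, hib, hba]
      · have e2 : walkSeq (r + s) d g (true, i) 2 = Sum.inr (true, j) := by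
          rw [walkSeq_succ, e1, hdi, glue_lt, stack_inr, hg, flip_cross_f_other hja hjb]
        rw [compDiagram_eq d g _ 2 (by rw [e2]; simp)
          (by intro m hm
              interval_cases m
              · rw [e0]; simp
              · rw [e1, hdi]; simp)]
        rw [e2]
        simp [tsurg, hdi, hia, hib, hja, hjb]
end WalksCross
section Circles

lemma walk_mem {V : Type*} {G : SimpleGraph V} {S : Set V}
    (hS : ∀ x y, x ∈ S → G.Adj x y → y ∈ S) :
    ∀ {x y : V}, G.Walk x y → x ∈ S → y ∈ S
  | _, _, SimpleGraph.Walk.nil, hx => hx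
  | _, _, SimpleGraph.Walk.cons h p, hx => walk_mem hS p (hS _ _ hx h)

lemma circles_zero {n : ℕ} (f g : WBVertex n → WBVertex n)
    (h : ∀ i, ¬ closedAt n f g i) : circlesCount n f g = 0 := by
  have : IsEmpty {c : (middleGraph n f g).ConnectedComponent //
      ∀ i : Fin n, (middleGraph n f g).connectedComponentMk i = c → closedAt n f g i} := by
    constructor
    rintro ⟨c, hc⟩
    obtain ⟨i, hi⟩ := c.exists_rep
    exact h i (hc i hi)
  exact Nat.card_of_isEmpty

variable {r s : ℕ}

lemma circles_zero_sswap_left {a b : Fin (r + s)} (hs : ((a : ℕ) < r ↔ (b : ℕ) < r))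
    (d : WBVertex (r + s) → WBVertex (r + s)) :
    circlesCount (r + s) (flipMap r s (Equiv.swap a b)) d = 0 := by
  refine circles_zero _ _ (fun i hcl => ?_)
  have h1 := hcl.1
  rw [flip_same_t hs] at h1
  simp at h1

lemma circles_zero_sswap_right {a b : Fin (r + s)} (hs : ((a : ℕ) < r ↔ (b : ℕ) < r))
    (d : WBVertex (r + s) → WBVertex (r + s)) :
    circlesCount (r + s) d (flipMap r s (Equiv.swap a b)) = 0 := by
  refine circles_zero _ _ (fun i hcl => ?_)
  have h1 := hcl.2
  rw [flip_same_f hs] at h1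
  simp at h1

lemma closed_cross_left {a b : Fin (r + s)}
    {d : WBVertex (r + s) → WBVertex (r + s)} {i : Fin (r + s)}
    (hcl : closedAt (r + s) (flipMap r s (Equiv.swap a b)) d i) : i = a ∨ i = b := by
  by_contra hcon
  push_neg at hcon
  have h1 := hcl.1
  rw [flip_cross_t_other hcon.1 hcon.2] at h1
  simp at h1

lemma closed_cross_right {a b : Fin (r + s)}
    {d : WBVertex (r + s) → WBVertex (r + s)} {i : Fin (r + s)}
    (hcl : closedAt (r + s) d (flipMap r s (Equiv.swap a b)) i) : i = a ∨ i = b := by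
  by_contra hcon
  push_neg at hcon
  have h1 := hcl.2
  rw [flip_cross_f_other hcon.1 hcon.2] at h1
  simp at h1

lemma circles_one_left {a b : Fin (r + s)} (hc : ¬((a : ℕ) < r ↔ (b : ℕ) < r))
    {d : WBVertex (r + s) → WBVertex (r + s)}
    (hinv : ∀ v, d (d v) = v) (hab' : d (false, a) = (false, b)) :
    circlesCount (r + s) (flipMap r s (Equiv.swap a b)) d = 1 := by
  have hab : a ≠ b := fun h => hc (by rw [h])
  set f := flipMap r s (Equiv.swap a b) with hf
  set G := middleGraph (r + s) f d with hG
  have hdb : d (false, b) = (false, a) := by rw [← hab', hinv]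
  have hca : closedAt (r + s) f d a := by
    constructor
    · rw [hf, flip_cross_t_fst hc]
    · rw [hab']
  have hcb : closedAt (r + s) f d b := by
    constructor
    · rw [hf, flip_cross_t_snd hc]
    · rw [hdb]
  have hstepa : ∀ y, G.Adj a y → y = b := by
    rintro y ⟨hxy, h1 | h2 | h3 | h4⟩
    · rw [hf, flip_cross_t_fst hc] at h1
      exact (congrArg Prod.snd h1).symm
    · by_cases hyb : y = b
      · exact hyb
      rw [hf, flip_cross_t_other (Ne.symm hxy) hyb] at h2
      simp at h2
    · rw [hab'] at h3
      exact (congrArg Prod.snd h3).symm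
    · have h5 : d (false, a) = (false, y) := by rw [← h4, hinv]
      rw [hab'] at h5
      exact (congrArg Prod.snd h5).symm
  have hstepb : ∀ y, G.Adj b y → y = a := by
    rintro y ⟨hxy, h1 | h2 | h3 | h4⟩
    · rw [hf, flip_cross_t_snd hc] at h1
      exact (congrArg Prod.snd h1).symm
    · by_cases hya : y = a
      · exact hya
      rw [hf, flip_cross_t_other hya (Ne.symm hxy)] at h2
      simp at h2
    · rw [hdb] at h3
      exact (congrArg Prod.snd h3).symm
    · have h5 : d (false, b) = (false, y) := by rw [← h4, hinv]
      rw [hdb] at h5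
      exact (congrArg Prod.snd h5).symm
  have hSclosed : ∀ x y : Fin (r + s), x ∈ ({z | z = a ∨ z = b} : Set (Fin (r + s))) →
      G.Adj x y → y ∈ ({z | z = a ∨ z = b} : Set (Fin (r + s))) := by
    rintro x y (hx | hx) hadj
    · right; exact hstepa y (by rwa [hx] at hadj)
    · left; exact hstepb y (by rwa [hx] at hadj)
  have hadjab : G.Adj a b := by
    refine ⟨hab, Or.inl ?_⟩
    rw [hf, flip_cross_t_fst hc]
  have h0 : ∀ i : Fin (r + s), G.connectedComponentMk i = G.connectedComponentMk a →
      closedAt (r + s) f d i := by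
    intro i hi
    have hr : G.Reachable a i := (SimpleGraph.ConnectedComponent.eq.mp hi).symm
    obtain ⟨w⟩ := hr
    have hmem := walk_mem hSclosed w (Or.inl rfl)
    rcases hmem with hI | hI
    · rw [hI]; exact hca
    · rw [hI]; exact hcb
  haveI : Unique {c : G.ConnectedComponent //
      ∀ i : Fin (r + s), G.connectedComponentMk i = c → closedAt (r + s) f d i} := by
    refine { default := ⟨G.connectedComponentMk a, h0⟩, uniq := ?_ }
    rintro ⟨c, hcc⟩
    apply Subtype.ext
    obtain ⟨i, hi⟩ := c.exists_rep
    have hcl := hcc i hi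
    show c = G.connectedComponentMk a
    rcases closed_cross_left hcl with hI | hI
    · rw [hI] at hi; exact hi.symm
    · rw [hI] at hi
      rw [← hi]
      exact SimpleGraph.ConnectedComponent.sound hadjab.symm.reachable
  exact Nat.card_unique

lemma circles_zero_cross_left {a b : Fin (r + s)} (hc : ¬((a : ℕ) < r ↔ (b : ℕ) < r))
    {d : WBVertex (r + s) → WBVertex (r + s)}
    (hinv : ∀ v, d (d v) = v) (hne : ∀ v, d v ≠ v) (hnab : d (false, a) ≠ (false, b)) :
    circlesCount (r + s) (flipMap r s (Equiv.swap a b)) d = 0 := by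
  set f := flipMap r s (Equiv.swap a b) with hf
  set G := middleGraph (r + s) f d with hG
  have key : ∀ (x y : Fin (r + s)), d (false, x) = (false, y) → y ≠ x → y ≠ a → y ≠ b →
      ∀ c, (∀ i : Fin (r + s), G.connectedComponentMk i = c → closedAt (r + s) f d i) →
      G.connectedComponentMk x = c → False := by
    intro x y hdx hyx hya hyb c hcc hx
    have hadj : G.Adj x y := ⟨fun h => hyx h.symm, Or.inr (Or.inr (Or.inl hdx))⟩
    have hy : G.connectedComponentMk y = c := by
      rw [← hx]
      exact SimpleGraph.ConnectedComponent.sound hadj.symm.reachable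
    have hcl := hcc y hy
    rcases closed_cross_left hcl with hI | hI
    · exact hya hI
    · exact hyb hI
  have : IsEmpty {c : G.ConnectedComponent //
      ∀ i : Fin (r + s), G.connectedComponentMk i = c → closedAt (r + s) f d i} := by
    constructor
    rintro ⟨c, hcc⟩
    obtain ⟨i, hi⟩ := c.exists_rep
    have hcl := hcc i hi
    have h2 := hcl.2
    rcases hda : d (false, i) with ⟨cb, j⟩
    cases cb
    · rcases closed_cross_left hcl with hI | hI
      · rw [hI] at hda hi
        refine key a j hda (fun h => hne (false, a) (by rw [hda, h])) ?_ ?_ c hcc hi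
        · intro h; exact hne _ (by rw [hda, h])
        · intro h; exact hnab (by rw [hda, h])
      · rw [hI] at hda hi
        refine key b j hda (fun h => hne (false, b) (by rw [hda, h])) ?_ ?_ c hcc hi
        · intro h
          rw [h] at hda
          exact hnab (by rw [← hda, hinv])
        · intro h; exact hne _ (by rw [hda, h])
    · rw [hda] at h2; simp at h2
  exact Nat.card_of_isEmpty

lemma circles_one_right {a b : Fin (r + s)} (hc : ¬((a : ℕ) < r ↔ (b : ℕ) < r))
    {d : WBVertex (r + s) → WBVertex (r + s)}
    (hinv : ∀ v, d (d v) = v) (hab' : d (true, a) = (true, b)) :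
    circlesCount (r + s) d (flipMap r s (Equiv.swap a b)) = 1 := by
  have hab : a ≠ b := fun h => hc (by rw [h])
  set g := flipMap r s (Equiv.swap a b) with hg
  set G := middleGraph (r + s) d g with hG
  have hdb : d (true, b) = (true, a) := by rw [← hab', hinv]
  have hca : closedAt (r + s) d g a := by
    constructor
    · rw [hab']
    · rw [hg, flip_cross_f_fst hc]
  have hcb : closedAt (r + s) d g b := by
    constructor
    · rw [hdb]
    · rw [hg, flip_cross_f_snd hc]
  have hstepa : ∀ y, G.Adj a y → y = b := by
    rintro y ⟨hxy, h1 | h2 | h3 | h4⟩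
    · rw [hab'] at h1
      exact (congrArg Prod.snd h1).symm
    · have h5 : d (true, a) = (true, y) := by rw [← h2, hinv]
      rw [hab'] at h5
      exact (congrArg Prod.snd h5).symm
    · rw [hg, flip_cross_f_fst hc] at h3
      exact (congrArg Prod.snd h3).symm
    · by_cases hyb : y = b
      · exact hyb
      rw [hg, flip_cross_f_other (Ne.symm hxy) hyb] at h4
      simp at h4
  have hstepb : ∀ y, G.Adj b y → y = a := by
    rintro y ⟨hxy, h1 | h2 | h3 | h4⟩
    · rw [hdb] at h1
      exact (congrArg Prod.snd h1).symm
    · have h5 : d (true, b) = (true, y) := by rw [← h2, hinv]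
      rw [hdb] at h5
      exact (congrArg Prod.snd h5).symm
    · rw [hg, flip_cross_f_snd hc] at h3
      exact (congrArg Prod.snd h3).symm
    · by_cases hya : y = a
      · exact hya
      rw [hg, flip_cross_f_other hya (Ne.symm hxy)] at h4
      simp at h4
  have hSclosed : ∀ x y : Fin (r + s), x ∈ ({z | z = a ∨ z = b} : Set (Fin (r + s))) →
      G.Adj x y → y ∈ ({z | z = a ∨ z = b} : Set (Fin (r + s))) := by
    rintro x y (hx | hx) hadj
    · right; exact hstepa y (by rwa [hx] at hadj)
    · left; exact hstepb y (by rwa [hx] at hadj)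
  have hadjab : G.Adj a b := by
    refine ⟨hab, Or.inl ?_⟩
    rw [hab']
  have h0 : ∀ i : Fin (r + s), G.connectedComponentMk i = G.connectedComponentMk a →
      closedAt (r + s) d g i := by
    intro i hi
    have hr : G.Reachable a i := (SimpleGraph.ConnectedComponent.eq.mp hi).symm
    obtain ⟨w⟩ := hr
    have hmem := walk_mem hSclosed w (Or.inl rfl)
    rcases hmem with hI | hI
    · rw [hI]; exact hca
    · rw [hI]; exact hcb
  haveI : Unique {c : G.ConnectedComponent //
      ∀ i : Fin (r + s), G.connectedComponentMk i = c → closedAt (r + s) d g i} := by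
    refine { default := ⟨G.connectedComponentMk a, h0⟩, uniq := ?_ }
    rintro ⟨c, hcc⟩
    apply Subtype.ext
    obtain ⟨i, hi⟩ := c.exists_rep
    have hcl := hcc i hi
    show c = G.connectedComponentMk a
    rcases closed_cross_right hcl with hI | hI
    · rw [hI] at hi; exact hi.symm
    · rw [hI] at hi
      rw [← hi]
      exact SimpleGraph.ConnectedComponent.sound hadjab.symm.reachable
  exact Nat.card_unique

lemma circles_zero_cross_right {a b : Fin (r + s)} (hc : ¬((a : ℕ) < r ↔ (b : ℕ) < r))
    {d : WBVertex (r + s) → WBVertex (r + s)}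
    (hinv : ∀ v, d (d v) = v) (hne : ∀ v, d v ≠ v) (hnab : d (true, a) ≠ (true, b)) :
    circlesCount (r + s) d (flipMap r s (Equiv.swap a b)) = 0 := by
  set g := flipMap r s (Equiv.swap a b) with hg
  set G := middleGraph (r + s) d g with hG
  have key : ∀ (x y : Fin (r + s)), d (true, x) = (true, y) → y ≠ x → y ≠ a → y ≠ b →
      ∀ c, (∀ i : Fin (r + s), G.connectedComponentMk i = c → closedAt (r + s) d g i) →
      G.connectedComponentMk x = c → False := by
    intro x y hdx hyx hya hyb c hcc hx
    have hadj : G.Adj x y := ⟨fun h => hyx h.symm, Or.inl hdx⟩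
    have hy : G.connectedComponentMk y = c := by
      rw [← hx]
      exact SimpleGraph.ConnectedComponent.sound hadj.symm.reachable
    have hcl := hcc y hy
    rcases closed_cross_right hcl with hI | hI
    · exact hya hI
    · exact hyb hI
  have : IsEmpty {c : G.ConnectedComponent //
      ∀ i : Fin (r + s), G.connectedComponentMk i = c → closedAt (r + s) d g i} := by
    constructor
    rintro ⟨c, hcc⟩
    obtain ⟨i, hi⟩ := c.exists_rep
    have hcl := hcc i hi
    have h2 := hcl.1
    rcases hda : d (true, i) with ⟨cb, j⟩
    cases cb
    · rw [hda] at h2; simp at h2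
    · rcases closed_cross_right hcl with hI | hI
      · rw [hI] at hda hi
        refine key a j hda (fun h => hne (true, a) (by rw [hda, h])) ?_ ?_ c hcc hi
        · intro h; exact hne _ (by rw [hda, h])
        · intro h; exact hnab (by rw [hda, h])
      · rw [hI] at hda hi
        refine key b j hda (fun h => hne (true, b) (by rw [hda, h])) ?_ ?_ c hcc hi
        · intro h
          rw [h] at hda
          exact hnab (by rw [← hda, hinv])
        · intro h; exact hne _ (by rw [hda, h])
  exact Nat.card_of_isEmpty

end Circles
section Identities

variable {n : ℕ}

lemma bswapV_fix {a b : Fin n} {w : WBVertex n} (h1 : w ≠ (false, a)) (h2 : w ≠ (false, b)) :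
    bswapV a b w = w := by
  obtain ⟨c, i⟩ := w
  cases c
  · rw [bswapV_f, Equiv.swap_apply_of_ne_of_ne (fun h => h1 (by rw [h])) (fun h => h2 (by rw [h]))]
  · rfl

lemma tswapV_fix {a b : Fin n} {w : WBVertex n} (h1 : w ≠ (true, a)) (h2 : w ≠ (true, b)) :
    tswapV a b w = w := by
  obtain ⟨c, i⟩ := w
  cases c
  · rfl
  · rw [tswapV_t, Equiv.swap_apply_of_ne_of_ne (fun h => h1 (by rw [h])) (fun h => h2 (by rw [h]))]

lemma bswapV_comm (a b : Fin n) : bswapV a b = bswapV b a := by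
  funext v
  obtain ⟨c, i⟩ := v
  cases c
  · rw [bswapV_f, bswapV_f, Equiv.swap_comm]
  · rfl

lemma tswapV_comm (a b : Fin n) : tswapV a b = tswapV b a := by
  funext v
  obtain ⟨c, i⟩ := v
  cases c
  · rfl
  · rw [tswapV_t, tswapV_t, Equiv.swap_comm]

lemma bsurg_comm {a b : Fin n} (hab : a ≠ b) (d : WBVertex n → WBVertex n) :
    bsurg n a b d = bsurg n b a d := by
  funext v
  simp only [bsurg]
  by_cases h1 : v = (false, a)
  · simp [h1, hab, Ne.symm hab]
  by_cases h2 : v = (false, b)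
  · simp [h1, h2, hab, Ne.symm hab]
  by_cases h3 : d v = (false, a)
  · simp [h1, h2, h3, hab, Ne.symm hab]
  by_cases h4 : d v = (false, b)
  · simp [h1, h2, h3, h4, hab, Ne.symm hab]
  · simp [h1, h2, h3, h4]

lemma tsurg_comm {a b : Fin n} (hab : a ≠ b) (d : WBVertex n → WBVertex n) :
    tsurg n a b d = tsurg n b a d := by
  funext v
  simp only [tsurg]
  by_cases h1 : v = (true, a)
  · simp [h1, hab, Ne.symm hab]
  by_cases h2 : v = (true, b)
  · simp [h1, h2, hab, Ne.symm hab]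
  by_cases h3 : d v = (true, a)
  · simp [h1, h2, h3, hab, Ne.symm hab]
  by_cases h4 : d v = (true, b)
  · simp [h1, h2, h3, h4, hab, Ne.symm hab]
  · simp [h1, h2, h3, h4]

lemma bsurg_self {a b : Fin n} {d : WBVertex n → WBVertex n}
    (hinv : ∀ v, d (d v) = v) (hab : a ≠ b) (hAB : d (false, a) = (false, b)) :
    bsurg n a b d = d := by
  have hBA : d (false, b) = (false, a) := by rw [← hAB, hinv]
  funext v
  simp only [bsurg]
  by_cases h1 : v = (false, a)
  · simp [h1, hAB]
  by_cases h2 : v = (false, b)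
  · simp [h1, h2, hBA]
  have h3 : d v ≠ (false, a) := fun h => h2 (by rw [← hinv v, h, hAB])
  have h4 : d v ≠ (false, b) := fun h => h1 (by rw [← hinv v, h, hBA])
  simp [h1, h2, h3, h4]

lemma tsurg_self {a b : Fin n} {d : WBVertex n → WBVertex n}
    (hinv : ∀ v, d (d v) = v) (hab : a ≠ b) (hAB : d (true, a) = (true, b)) :
    tsurg n a b d = d := by
  have hBA : d (true, b) = (true, a) := by rw [← hAB, hinv]
  funext v
  simp only [tsurg]
  by_cases h1 : v = (true, a)
  · simp [h1, hAB]
  by_cases h2 : v = (true, b)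
  · simp [h1, h2, hBA]
  have h3 : d v ≠ (true, a) := fun h => h2 (by rw [← hinv v, h, hAB])
  have h4 : d v ≠ (true, b) := fun h => h1 (by rw [← hinv v, h, hBA])
  simp [h1, h2, h3, h4]

/-- I1: both strands vertical, bottom relabelling equals top relabelling. -/
lemma key_vv_same {a b a' b' : Fin n} {d : WBVertex n → WBVertex n}
    (hinv : ∀ v, d (d v) = v)
    (hA : d (false, a) = (true, a')) (hB : d (false, b) = (true, b')) (hab : a ≠ b) :
    (fun v => bswapV a b (d (bswapV a b v))) = fun v => tswapV a' b' (d (tswapV a' b' v)) := by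
  have hA' : d (true, a') = (false, a) := by rw [← hA, hinv]
  have hB' : d (true, b') = (false, b) := by rw [← hB, hinv]
  have hab' : a' ≠ b' := by
    intro h
    rw [h] at hA'
    rw [hB'] at hA'
    exact hab (congrArg Prod.snd hA').symm
  funext v
  by_cases hva : v = (false, a)
  · simp [hva, hA, hB, Equiv.swap_apply_left, hab, hab', Ne.symm hab, Ne.symm hab']
  by_cases hvb : v = (false, b)
  · simp [hvb, hA, hB, Equiv.swap_apply_right, hab, hab', Ne.symm hab, Ne.symm hab']
  by_cases hva' : v = (true, a')
  · simp [hva', hA', hB', Equiv.swap_apply_left, hab, hab', Ne.symm hab, Ne.symm hab']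
  by_cases hvb' : v = (true, b')
  · simp [hvb', hA', hB', Equiv.swap_apply_right, hab, hab', Ne.symm hab, Ne.symm hab']
  have hw1 : d v ≠ (false, a) := fun h => hva' (by rw [← hinv v, h, hA])
  have hw2 : d v ≠ (false, b) := fun h => hvb' (by rw [← hinv v, h, hB])
  have hw3 : d v ≠ (true, a') := fun h => hva (by rw [← hinv v, h, hA'])
  have hw4 : d v ≠ (true, b') := fun h => hvb (by rw [← hinv v, h, hB'])
  rw [bswapV_fix hva hvb, tswapV_fix hva' hvb', bswapV_fix hw1 hw2, tswapV_fix hw3 hw4]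

/-- I2: both strands vertical, bottom surgery equals top surgery. -/
lemma key_vv_cross {a b a' b' : Fin n} {d : WBVertex n → WBVertex n}
    (hinv : ∀ v, d (d v) = v)
    (hA : d (false, a) = (true, a')) (hB : d (false, b) = (true, b')) (hab : a ≠ b) :
    bsurg n a b d = tsurg n a' b' d := by
  have hA' : d (true, a') = (false, a) := by rw [← hA, hinv]
  have hB' : d (true, b') = (false, b) := by rw [← hB, hinv]
  have hab' : a' ≠ b' := by
    intro h
    rw [h] at hA'
    rw [hB'] at hA'
    exact hab (congrArg Prod.snd hA').symm
  funext v
  simp only [bsurg, tsurg]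
  by_cases hva : v = (false, a)
  · simp [hva, hA, hB', hab, hab', Ne.symm hab, Ne.symm hab']
  by_cases hvb : v = (false, b)
  · simp [hva, hvb, hB, hA', hab, hab', Ne.symm hab, Ne.symm hab']
  by_cases hva' : v = (true, a')
  · simp [hva, hvb, hva', hA', hB, hab, hab', Ne.symm hab, Ne.symm hab']
  by_cases hvb' : v = (true, b')
  · simp [hva, hvb, hva', hvb', hB', hA, hab, hab', Ne.symm hab, Ne.symm hab']
  have hw1 : d v ≠ (false, a) := fun h => hva' (by rw [← hinv v, h, hA])
  have hw2 : d v ≠ (false, b) := fun h => hvb' (by rw [← hinv v, h, hB])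
  have hw3 : d v ≠ (true, a') := fun h => hva (by rw [← hinv v, h, hA'])
  have hw4 : d v ≠ (true, b') := fun h => hvb (by rw [← hinv v, h, hB'])
  simp [hva, hvb, hva', hvb', hw1, hw2, hw3, hw4]

/-- I3: `b` on a bottom horizontal strand `b - c`; relabelling at `a, b` equals
surgery at `a, c`. -/
lemma key_cancel {a b c : Fin n} {d : WBVertex n → WBVertex n}
    (hinv : ∀ v, d (d v) = v) (hne : ∀ v, d v ≠ v)
    (hB : d (false, b) = (false, c)) (hab : a ≠ b) (hca : c ≠ a) :
    (fun v => bswapV a b (d (bswapV a b v))) = bsurg n a c d := by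
  have hC : d (false, c) = (false, b) := by rw [← hB, hinv]
  have hcb : c ≠ b := fun h => hne (false, b) (by rw [hB, h])
  funext v
  by_cases hva : v = (false, a)
  · have : bswapV a b (false, a) = (false, b) := by simp [Equiv.swap_apply_left]
    rw [hva, this, hB, bswapV_fix (by simp [hca]) (by simp [hcb])]
    simp [bsurg]
  by_cases hvb : v = (false, b)
  · have : bswapV a b (false, b) = (false, a) := by simp [Equiv.swap_apply_right]
    rw [hvb, this]
    have hw1 : d (false, a) ≠ (false, a) := hne _
    have hw2 : d (false, a) ≠ (false, b) := fun h => hca (by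
      have : d (false, b) = (false, a) := by rw [← h, hinv]
      rw [hB] at this
      exact congrArg Prod.snd this)
    rw [bswapV_fix hw1 hw2]
    simp only [bsurg]
    rw [if_neg (by simp [Ne.symm hab]), if_neg (by simp [Ne.symm hcb]),
      if_neg (by rw [hB]; simp [hca]), if_pos hB]
  by_cases hvc : v = (false, c)
  · rw [hvc, show bswapV a b (false, c) = (false, c) from bswapV_fix (by simp [hca]) (by simp [hcb]), hC]
    have : bswapV a b (false, b) = (false, a) := by simp [Equiv.swap_apply_right]
    rw [this]
    simp [bsurg, hca, hcb]
  by_cases hvw : v = d (false, a)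
  · have hdv : d v = (false, a) := by rw [hvw, hinv]
    rw [bswapV_fix hva hvb, hdv]
    have : bswapV a b (false, a) = (false, b) := by simp [Equiv.swap_apply_left]
    rw [this]
    simp only [bsurg]
    rw [if_neg hva, if_neg hvc, if_pos hdv, hC]
  · have hw1 : d v ≠ (false, a) := fun h => hvw (by rw [← hinv v, h])
    have hw2 : d v ≠ (false, b) := fun h => hvc (by rw [← hinv v, h, hB])
    have hw3 : d v ≠ (false, c) := fun h => hvb (by rw [← hinv v, h, hC])
    rw [bswapV_fix hva hvb, bswapV_fix hw1 hw2]
    simp only [bsurg]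
    rw [if_neg hva, if_neg hvc, if_neg hw1, if_neg hw3]

/-- I3 (top mirror): `b` on a top horizontal strand `b - c`. -/
lemma key_cancel_top {a b c : Fin n} {d : WBVertex n → WBVertex n}
    (hinv : ∀ v, d (d v) = v) (hne : ∀ v, d v ≠ v)
    (hB : d (true, b) = (true, c)) (hab : a ≠ b) (hca : c ≠ a) :
    (fun v => tswapV a b (d (tswapV a b v))) = tsurg n a c d := by
  have hC : d (true, c) = (true, b) := by rw [← hB, hinv]
  have hcb : c ≠ b := fun h => hne (true, b) (by rw [hB, h])
  funext v
  by_cases hva : v = (true, a)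
  · have : tswapV a b (true, a) = (true, b) := by simp [Equiv.swap_apply_left]
    rw [hva, this, hB, tswapV_fix (by simp [hca]) (by simp [hcb])]
    simp [tsurg]
  by_cases hvb : v = (true, b)
  · have : tswapV a b (true, b) = (true, a) := by simp [Equiv.swap_apply_right]
    rw [hvb, this]
    have hw1 : d (true, a) ≠ (true, a) := hne _
    have hw2 : d (true, a) ≠ (true, b) := fun h => hca (by
      have : d (true, b) = (true, a) := by rw [← h, hinv]
      rw [hB] at this
      exact congrArg Prod.snd this)
    rw [tswapV_fix hw1 hw2]
    simp only [tsurg]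
    rw [if_neg (by simp [Ne.symm hab]), if_neg (by simp [Ne.symm hcb]),
      if_neg (by rw [hB]; simp [hca]), if_pos hB]
  by_cases hvc : v = (true, c)
  · rw [hvc, show tswapV a b (true, c) = (true, c) from tswapV_fix (by simp [hca]) (by simp [hcb]), hC]
    have : tswapV a b (true, b) = (true, a) := by simp [Equiv.swap_apply_right]
    rw [this]
    simp [tsurg, hca, hcb]
  by_cases hvw : v = d (true, a)
  · have hdv : d v = (true, a) := by rw [hvw, hinv]
    rw [tswapV_fix hva hvb, hdv]
    have : tswapV a b (true, a) = (true, b) := by simp [Equiv.swap_apply_left]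
    rw [this]
    simp only [tsurg]
    rw [if_neg hva, if_neg hvc, if_pos hdv, hC]
  · have hw1 : d v ≠ (true, a) := fun h => hvw (by rw [← hinv v, h])
    have hw2 : d v ≠ (true, b) := fun h => hvc (by rw [← hinv v, h, hB])
    have hw3 : d v ≠ (true, c) := fun h => hvb (by rw [← hinv v, h, hC])
    rw [tswapV_fix hva hvb, tswapV_fix hw1 hw2]
    simp only [tsurg]
    rw [if_neg hva, if_neg hvc, if_neg hw1, if_neg hw3]

end Identities
section MulAlg

variable {n : ℕ} {δ : ℂ}

lemma wbMul_zero_right (x : (WBVertex n → WBVertex n) →₀ ℂ) : wbMul n δ x 0 = 0 := by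
  unfold wbMul
  simp [Finsupp.sum_zero_index]

lemma wbMul_zero_left (y : (WBVertex n → WBVertex n) →₀ ℂ) : wbMul n δ 0 y = 0 := by
  unfold wbMul
  simp [Finsupp.sum_zero_index]

lemma wbMul_add_left (x₁ x₂ y : (WBVertex n → WBVertex n) →₀ ℂ) :
    wbMul n δ (x₁ + x₂) y = wbMul n δ x₁ y + wbMul n δ x₂ y := by
  unfold wbMul
  apply Finsupp.sum_add_index'
  · intro f
    simp
  · intro f a₁ a₂
    rw [← Finsupp.sum_add]
    congr 1
    funext g b
    rw [← add_smul]
    congr 1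
    ring

lemma wbMul_add_right (x y₁ y₂ : (WBVertex n → WBVertex n) →₀ ℂ) :
    wbMul n δ x (y₁ + y₂) = wbMul n δ x y₁ + wbMul n δ x y₂ := by
  unfold wbMul
  rw [← Finsupp.sum_add]
  congr 1
  funext f a
  apply Finsupp.sum_add_index'
  · intro g
    simp
  · intro g b₁ b₂
    rw [← add_smul]
    congr 1
    ring

lemma wbMul_smul_right (c : ℂ) (x y : (WBVertex n → WBVertex n) →₀ ℂ) :
    wbMul n δ x (c • y) = c • wbMul n δ x y := by
  unfold wbMul
  rw [Finsupp.smul_sum]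
  congr 1
  funext f a
  rw [Finsupp.sum_smul_index (fun g => by simp), Finsupp.smul_sum]
  congr 1
  funext g b
  rw [smul_smul]
  congr 1
  ring

lemma wbMul_single_single (f g : WBVertex n → WBVertex n) (a b : ℂ) :
    wbMul n δ (Finsupp.single f a) (Finsupp.single g b)
      = (a * b * δ ^ circlesCount n f g) • Finsupp.single (compDiagram n f g) (1 : ℂ) := by
  unfold wbMul
  rw [Finsupp.sum_single_index (by simp [Finsupp.sum_single_index]),
    Finsupp.sum_single_index (by simp)]

lemma wbMul_sum_left {α : Type*} (t : Finset α) (F : α → ((WBVertex n → WBVertex n) →₀ ℂ))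
    (y : (WBVertex n → WBVertex n) →₀ ℂ) :
    wbMul n δ (∑ p ∈ t, F p) y = ∑ p ∈ t, wbMul n δ (F p) y :=
  map_sum (AddMonoidHom.mk' (fun x => wbMul n δ x y) (fun x₁ x₂ => wbMul_add_left x₁ x₂ y)) F t

lemma wbMul_sum_right {α : Type*} (t : Finset α) (F : α → ((WBVertex n → WBVertex n) →₀ ℂ))
    (x : (WBVertex n → WBVertex n) →₀ ℂ) :
    wbMul n δ x (∑ p ∈ t, F p) = ∑ p ∈ t, wbMul n δ x (F p) :=
  map_sum (AddMonoidHom.mk' (fun y => wbMul n δ x y) (fun y₁ y₂ => wbMul_add_right x y₁ y₂)) F t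

end MulAlg
section Sums

variable (r s : ℕ) (δ : ℂ)

/-- The term of `z·d` indexed by the pair `p`. -/
noncomputable def WLt (d : WBVertex (r + s) → WBVertex (r + s))
    (p : Fin (r + s) × Fin (r + s)) : (WBVertex (r + s) → WBVertex (r + s)) →₀ ℂ :=
  ((if ((p.1 : ℕ) < r ↔ (p.2 : ℕ) < r) then (1 : ℂ) else -1)
      * δ ^ circlesCount (r + s) (flipMap r s (Equiv.swap p.1 p.2)) d) •
    Finsupp.single (compDiagram (r + s) (flipMap r s (Equiv.swap p.1 p.2)) d) (1 : ℂ)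

/-- The term of `d·z` indexed by the pair `p`. -/
noncomputable def WRt (d : WBVertex (r + s) → WBVertex (r + s))
    (p : Fin (r + s) × Fin (r + s)) : (WBVertex (r + s) → WBVertex (r + s)) →₀ ℂ :=
  ((if ((p.1 : ℕ) < r ↔ (p.2 : ℕ) < r) then (1 : ℂ) else -1)
      * δ ^ circlesCount (r + s) d (flipMap r s (Equiv.swap p.1 p.2))) •
    Finsupp.single (compDiagram (r + s) d (flipMap r s (Equiv.swap p.1 p.2))) (1 : ℂ)

variable {r s δ}

lemma WLt_symm (d : WBVertex (r + s) → WBVertex (r + s)) (a b : Fin (r + s)) :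
    WLt r s δ d (b, a) = WLt r s δ d (a, b) := by
  unfold WLt
  rw [Equiv.swap_comm b a]
  congr 2
  exact if_congr Iff.comm rfl rfl

lemma WRt_symm (d : WBVertex (r + s) → WBVertex (r + s)) (a b : Fin (r + s)) :
    WRt r s δ d (b, a) = WRt r s δ d (a, b) := by
  unfold WRt
  rw [Equiv.swap_comm b a]
  congr 2
  exact if_congr Iff.comm rfl rfl

lemma lhs_repr (d : WBVertex (r + s) → WBVertex (r + s)) :
    wbMul (r + s) δ (zElt r s) (Finsupp.single d 1)
      = ∑ p ∈ Finset.univ.filter (fun p : Fin (r + s) × Fin (r + s) => p.1 < p.2),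
          WLt r s δ d p := by
  rw [zElt, wbMul_sum_left, Finset.sum_filter]
  apply Finset.sum_congr rfl
  intro p _
  by_cases hp : p.1 < p.2
  · rw [if_pos hp, if_pos hp, Finsupp.smul_single', mul_one, wbMul_single_single]
    unfold WLt
    congr 1
    ring
  · rw [if_neg hp, if_neg hp, wbMul_zero_left]

lemma rhs_repr (d : WBVertex (r + s) → WBVertex (r + s)) :
    wbMul (r + s) δ (Finsupp.single d 1) (zElt r s)
      = ∑ p ∈ Finset.univ.filter (fun p : Fin (r + s) × Fin (r + s) => p.1 < p.2),
          WRt r s δ d p := by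
  rw [zElt, wbMul_sum_right, Finset.sum_filter]
  apply Finset.sum_congr rfl
  intro p _
  by_cases hp : p.1 < p.2
  · rw [if_pos hp, if_pos hp, Finsupp.smul_single', mul_one, wbMul_single_single]
    unfold WRt
    congr 1
    ring
  · rw [if_neg hp, if_neg hp, wbMul_zero_right]

/-- Doubling: a symmetric sum over the off-diagonal is twice the sum over `p.1 < p.2`. -/
lemma sum_offdiag_eq_two {M : Type*} [AddCommMonoid M] {m : ℕ} (W : Fin m × Fin m → M)
    (hsymm : ∀ a b : Fin m, W (b, a) = W (a, b)) :
    ∑ p ∈ Finset.univ.filter (fun p : Fin m × Fin m => p.1 ≠ p.2), W p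
      = (∑ p ∈ Finset.univ.filter (fun p : Fin m × Fin m => p.1 < p.2), W p)
        + ∑ p ∈ Finset.univ.filter (fun p : Fin m × Fin m => p.1 < p.2), W p := by
  have hsplit : Finset.univ.filter (fun p : Fin m × Fin m => p.1 ≠ p.2)
      = (Finset.univ.filter (fun p : Fin m × Fin m => p.1 < p.2))
        ∪ (Finset.univ.filter (fun p : Fin m × Fin m => p.2 < p.1)) := by
    ext p
    simp only [Finset.mem_filter, Finset.mem_univ, true_and, Finset.mem_union]
    constructor
    · intro h
      rcases lt_or_gt_of_ne h with h' | h'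
      · exact Or.inl h'
      · exact Or.inr h'
    · rintro (h | h)
      · exact ne_of_lt h
      · exact (ne_of_lt h).symm
  rw [hsplit, Finset.sum_union]
  · congr 1
    refine Finset.sum_nbij' (fun p => (p.2, p.1)) (fun p => (p.2, p.1)) ?_ ?_ ?_ ?_ ?_
    · intro p hp
      simp only [Finset.mem_filter, Finset.mem_univ, true_and] at hp ⊢
      exact hp
    · intro p hp
      simp only [Finset.mem_filter, Finset.mem_univ, true_and] at hp ⊢
      exact hp
    · intro p _; rfl
    · intro p _; rfl
    · intro p _
      exact (hsymm p.1 p.2).symm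
  · rw [Finset.disjoint_left]
    intro p hp hp'
    simp only [Finset.mem_filter, Finset.mem_univ, true_and] at hp hp'
    exact absurd hp' (not_lt_of_gt hp)

/-- Count of bottom horizontal half-edges equals count of top ones. -/
lemma card_horiz_eq {n : ℕ} {d : WBVertex n → WBVertex n} (hinv : ∀ v, d (d v) = v) :
    (Finset.univ.filter (fun i : Fin n => (d (false, i)).1 = false)).card
      = (Finset.univ.filter (fun i : Fin n => (d (true, i)).1 = true)).card := by
  have hup : ∀ i : Fin n, (d (false, i)).1 = true → d (true, (d (false, i)).2) = (false, i) := by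
    intro i h
    have e : ((true, (d (false, i)).2) : WBVertex n) = d (false, i) := by
      rw [← h]
    rw [e, hinv]
  have hdown : ∀ i : Fin n, (d (true, i)).1 = false → d (false, (d (true, i)).2) = (true, i) := by
    intro i h
    have e : ((false, (d (true, i)).2) : WBVertex n) = d (true, i) := by
      rw [← h]
    rw [e, hinv]
  have hmid : (Finset.univ.filter (fun i : Fin n => (d (false, i)).1 = true)).card
      = (Finset.univ.filter (fun j : Fin n => (d (true, j)).1 = false)).card := by
    refine Finset.card_nbij' (fun i => (d (false, i)).2) (fun j => (d (true, j)).2) ?_ ?_ ?_ ?_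
    · intro i hi
      simp only [Finset.mem_coe, Finset.mem_filter, Finset.mem_univ, true_and] at hi ⊢
      rw [hup i hi]
    · intro j hj
      simp only [Finset.mem_coe, Finset.mem_filter, Finset.mem_univ, true_and] at hj ⊢
      rw [hdown j hj]
    · intro i hi
      simp only [Finset.mem_coe, Finset.mem_filter, Finset.mem_univ, true_and] at hi
      show (d (true, (d (false, i)).2)).2 = i
      rw [hup i hi]
    · intro j hj
      simp only [Finset.mem_coe, Finset.mem_filter, Finset.mem_univ, true_and] at hj
      show (d (false, (d (true, j)).2)).2 = j
      rw [hdown j hj]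
  have h1 := Finset.card_filter_add_card_filter_not
    (s := (Finset.univ : Finset (Fin n))) (p := fun i => (d (false, i)).1 = true)
  have h2 := Finset.card_filter_add_card_filter_not
    (s := (Finset.univ : Finset (Fin n))) (p := fun j => (d (true, j)).1 = false)
  have e1 : Finset.univ.filter (fun i : Fin n => ¬ (d (false, i)).1 = true)
      = Finset.univ.filter (fun i : Fin n => (d (false, i)).1 = false) := by
    apply Finset.filter_congr
    intro i _
    simp [Bool.not_eq_true]
  have e2 : Finset.univ.filter (fun j : Fin n => ¬ (d (true, j)).1 = false)
      = Finset.univ.filter (fun j : Fin n => (d (true, j)).1 = true) := by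
    apply Finset.filter_congr
    intro j _
    simp [Bool.not_eq_false]
  rw [e1] at h1
  rw [e2] at h2
  omega

end Sums
section Pieces

lemma eta_of_fst {α β : Type*} {w : α × β} {c : α} (h : w.1 = c) : w = (c, w.2) := by
  obtain ⟨c', i⟩ := w
  cases h
  rfl

variable {r s : ℕ} {δ : ℂ}

lemma pieceA {d : WBVertex (r + s) → WBVertex (r + s)}
    (hinv : ∀ v, d (d v) = v) (hne : ∀ v, d v ≠ v)
    (hside : ∀ (b : Bool) (i : Fin (r + s)),
      ((d (b, i)).1 ≠ b → (((d (b, i)).2 : ℕ) < r ↔ (i : ℕ) < r)) ∧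
      ((d (b, i)).1 = b → ¬(((d (b, i)).2 : ℕ) < r ↔ (i : ℕ) < r))) :
    ∑ p ∈ (Finset.univ.filter (fun p : Fin (r + s) × Fin (r + s) => p.1 ≠ p.2)).filter
        (fun p => (d (false, p.1)).1 = true ∧ (d (false, p.2)).1 = true), WLt r s δ d p
    = ∑ q ∈ (Finset.univ.filter (fun p : Fin (r + s) × Fin (r + s) => p.1 ≠ p.2)).filter
        (fun q => (d (true, q.1)).1 = false ∧ (d (true, q.2)).1 = false), WRt r s δ d q := by
  have hup : ∀ i, (d (false, i)).1 = true → d (true, (d (false, i)).2) = (false, i) := by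
    intro i h
    rw [← eta_of_fst h, hinv]
  have hdown : ∀ i, (d (true, i)).1 = false → d (false, (d (true, i)).2) = (true, i) := by
    intro i h
    rw [← eta_of_fst h, hinv]
  refine Finset.sum_nbij' (fun p => ((d (false, p.1)).2, (d (false, p.2)).2))
    (fun q => ((d (true, q.1)).2, (d (true, q.2)).2)) ?_ ?_ ?_ ?_ ?_
  · intro p hp
    simp only [Finset.mem_filter, Finset.mem_univ, true_and] at hp ⊢
    obtain ⟨hp12, hv1, hv2⟩ := hp
    refine ⟨?_, ?_, ?_⟩
    · intro h
      apply hp12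
      have h1 := hup p.1 hv1
      have h2 := hup p.2 hv2
      rw [h, h2] at h1
      exact (congrArg Prod.snd h1).symm
    · rw [hup p.1 hv1]
    · rw [hup p.2 hv2]
  · intro q hq
    simp only [Finset.mem_filter, Finset.mem_univ, true_and] at hq ⊢
    obtain ⟨hq12, hv1, hv2⟩ := hq
    refine ⟨?_, ?_, ?_⟩
    · intro h
      apply hq12
      have h1 := hdown q.1 hv1
      have h2 := hdown q.2 hv2
      rw [h, h2] at h1
      exact (congrArg Prod.snd h1).symm
    · rw [hdown q.1 hv1]
    · rw [hdown q.2 hv2]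
  · intro p hp
    simp only [Finset.mem_filter, Finset.mem_univ, true_and] at hp
    obtain ⟨hp12, hv1, hv2⟩ := hp
    show ((d (true, (d (false, p.1)).2)).2, (d (true, (d (false, p.2)).2)).2) = p
    rw [hup p.1 hv1, hup p.2 hv2]
  · intro q hq
    simp only [Finset.mem_filter, Finset.mem_univ, true_and] at hq
    obtain ⟨hq12, hv1, hv2⟩ := hq
    show ((d (false, (d (true, q.1)).2)).2, (d (false, (d (true, q.2)).2)).2) = q
    rw [hdown q.1 hv1, hdown q.2 hv2]
  · intro p hp
    simp only [Finset.mem_filter, Finset.mem_univ, true_and] at hp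
    obtain ⟨hp12, hv1, hv2⟩ := hp
    have hA : d (false, p.1) = (true, (d (false, p.1)).2) := eta_of_fst hv1
    have hB : d (false, p.2) = (true, (d (false, p.2)).2) := eta_of_fst hv2
    have hA' := hup p.1 hv1
    have hB' := hup p.2 hv2
    have hs1 : (((d (false, p.1)).2 : ℕ) < r ↔ ((p.1 : Fin (r + s)) : ℕ) < r) := by
      refine (hside false p.1).1 ?_
      rw [hA]
      simp
    have hs2 : (((d (false, p.2)).2 : ℕ) < r ↔ ((p.2 : Fin (r + s)) : ℕ) < r) := by
      refine (hside false p.2).1 ?_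
      rw [hB]
      simp
    by_cases hss : ((p.1 : ℕ) < r ↔ (p.2 : ℕ) < r)
    · have hss' : (((d (false, p.1)).2 : ℕ) < r ↔ ((d (false, p.2)).2 : ℕ) < r) := by tauto
      unfold WLt WRt
      rw [if_pos hss, if_pos hss', circles_zero_sswap_left hss,
        circles_zero_sswap_right hss', comp_sswap_left hss d, comp_sswap_right hss' d,
        key_vv_same hinv hA hB hp12]
    · have hss' : ¬(((d (false, p.1)).2 : ℕ) < r ↔ ((d (false, p.2)).2 : ℕ) < r) := by tauto
      unfold WLt WRt
      rw [if_neg hss, if_neg hss',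
        circles_zero_cross_left hss hinv hne (by rw [hA]; simp),
        circles_zero_cross_right hss' hinv hne (by rw [hA']; simp),
        comp_cross_left hss hinv hne, comp_cross_right hss' hinv hne,
        key_vv_cross hinv hA hB hp12]

end Pieces
section PieceB

variable {r s : ℕ} {δ : ℂ}

/-- The fundamental cancellation: a same-side transposition term at `(a,b)` with `b` on a
bottom horizontal strand cancels against the cross contraction term at `(a, ∂b)`. -/
lemma cancel_term {d : WBVertex (r + s) → WBVertex (r + s)}
    (hinv : ∀ v, d (d v) = v) (hne : ∀ v, d v ≠ v)
    (hside : ∀ (b : Bool) (i : Fin (r + s)),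
      ((d (b, i)).1 ≠ b → (((d (b, i)).2 : ℕ) < r ↔ (i : ℕ) < r)) ∧
      ((d (b, i)).1 = b → ¬(((d (b, i)).2 : ℕ) < r ↔ (i : ℕ) < r)))
    (a b : Fin (r + s)) (hab : a ≠ b)
    (hnSS : d (false, a) ≠ (false, b)) (hbh : (d (false, b)).1 = false) :
    WLt r s δ d (a, b) + WLt r s δ d (a, (d (false, b)).2) = 0 := by
  have hB : d (false, b) = (false, (d (false, b)).2) := eta_of_fst hbh
  have hC : d (false, (d (false, b)).2) = (false, b) := by rw [← hB, hinv]
  have hcb_side : ¬(((d (false, b)).2 : ℕ) < r ↔ (b : ℕ) < r) := (hside false b).2 hbh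
  have hcb : (d (false, b)).2 ≠ b := fun h => hne (false, b) (by rw [hB, h])
  have hac : a ≠ (d (false, b)).2 := fun h => hnSS (by rw [h]; exact hC)
  have hnac : d (false, a) ≠ (false, (d (false, b)).2) := by
    intro h
    have h2 : d (false, (d (false, b)).2) = (false, a) := by rw [← h, hinv]
    rw [hC] at h2
    exact hab (congrArg Prod.snd h2).symm
  by_cases hss : ((a : ℕ) < r ↔ (b : ℕ) < r)
  · have hss_c : ¬((a : ℕ) < r ↔ (((d (false, b)).2 : Fin (r + s)) : ℕ) < r) := by tauto
    simp only [WLt]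
    rw [if_pos hss, if_neg hss_c, circles_zero_sswap_left hss,
      circles_zero_cross_left hss_c hinv hne hnac,
      comp_sswap_left hss d, comp_cross_left hss_c hinv hne,
      key_cancel hinv hne hB hab (Ne.symm hac)]
    simp
  · have hss_c : ((a : ℕ) < r ↔ (((d (false, b)).2 : Fin (r + s)) : ℕ) < r) := by tauto
    simp only [WLt]
    rw [if_neg hss, if_pos hss_c, circles_zero_cross_left hss hinv hne hnSS,
      circles_zero_sswap_left hss_c,
      comp_cross_left hss hinv hne, comp_sswap_left hss_c d,
      key_cancel hinv hne hC hac (Ne.symm hab)]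
    simp

/-- Top mirror of `cancel_term`. -/
lemma cancel_term_top {d : WBVertex (r + s) → WBVertex (r + s)}
    (hinv : ∀ v, d (d v) = v) (hne : ∀ v, d v ≠ v)
    (hside : ∀ (b : Bool) (i : Fin (r + s)),
      ((d (b, i)).1 ≠ b → (((d (b, i)).2 : ℕ) < r ↔ (i : ℕ) < r)) ∧
      ((d (b, i)).1 = b → ¬(((d (b, i)).2 : ℕ) < r ↔ (i : ℕ) < r)))
    (a b : Fin (r + s)) (hab : a ≠ b)
    (hnSS : d (true, a) ≠ (true, b)) (hbh : (d (true, b)).1 = true) :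
    WRt r s δ d (a, b) + WRt r s δ d (a, (d (true, b)).2) = 0 := by
  have hB : d (true, b) = (true, (d (true, b)).2) := eta_of_fst hbh
  have hC : d (true, (d (true, b)).2) = (true, b) := by rw [← hB, hinv]
  have hcb_side : ¬(((d (true, b)).2 : ℕ) < r ↔ (b : ℕ) < r) := (hside true b).2 hbh
  have hcb : (d (true, b)).2 ≠ b := fun h => hne (true, b) (by rw [hB, h])
  have hac : a ≠ (d (true, b)).2 := fun h => hnSS (by rw [h]; exact hC)
  have hnac : d (true, a) ≠ (true, (d (true, b)).2) := by
    intro h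
    have h2 : d (true, (d (true, b)).2) = (true, a) := by rw [← h, hinv]
    rw [hC] at h2
    exact hab (congrArg Prod.snd h2).symm
  by_cases hss : ((a : ℕ) < r ↔ (b : ℕ) < r)
  · have hss_c : ¬((a : ℕ) < r ↔ (((d (true, b)).2 : Fin (r + s)) : ℕ) < r) := by tauto
    simp only [WRt]
    rw [if_pos hss, if_neg hss_c, circles_zero_sswap_right hss,
      circles_zero_cross_right hss_c hinv hne hnac,
      comp_sswap_right hss d, comp_cross_right hss_c hinv hne,
      key_cancel_top hinv hne hB hab (Ne.symm hac)]
    simp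
  · have hss_c : ((a : ℕ) < r ↔ (((d (true, b)).2 : Fin (r + s)) : ℕ) < r) := by tauto
    simp only [WRt]
    rw [if_neg hss, if_pos hss_c, circles_zero_cross_right hss hinv hne hnSS,
      circles_zero_sswap_right hss_c,
      comp_cross_right hss hinv hne, comp_sswap_right hss_c d,
      key_cancel_top hinv hne hC hac (Ne.symm hab)]
    simp

lemma pieceB_left {d : WBVertex (r + s) → WBVertex (r + s)}
    (hinv : ∀ v, d (d v) = v) (hne : ∀ v, d v ≠ v)
    (hside : ∀ (b : Bool) (i : Fin (r + s)),
      ((d (b, i)).1 ≠ b → (((d (b, i)).2 : ℕ) < r ↔ (i : ℕ) < r)) ∧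
      ((d (b, i)).1 = b → ¬(((d (b, i)).2 : ℕ) < r ↔ (i : ℕ) < r))) :
    ∑ p ∈ (Finset.univ.filter (fun p : Fin (r + s) × Fin (r + s) => p.1 ≠ p.2)).filter
        (fun p => ¬((d (false, p.1)).1 = true ∧ (d (false, p.2)).1 = true)), WLt r s δ d p
      = (Finset.univ.filter (fun i : Fin (r + s) => (d (false, i)).1 = false)).card •
          ((-δ) • Finsupp.single d (1 : ℂ)) := by
  rw [← Finset.sum_filter_add_sum_filter_not
    (((Finset.univ.filter (fun p : Fin (r + s) × Fin (r + s) => p.1 ≠ p.2)).filter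
        (fun p => ¬((d (false, p.1)).1 = true ∧ (d (false, p.2)).1 = true))))
    (fun p => d (false, p.1) = (false, p.2)) (WLt r s δ d)]
  have hzero : ∑ p ∈ ((Finset.univ.filter (fun p : Fin (r + s) × Fin (r + s) => p.1 ≠ p.2)).filter
        (fun p => ¬((d (false, p.1)).1 = true ∧ (d (false, p.2)).1 = true))).filter
        (fun p => ¬ d (false, p.1) = (false, p.2)), WLt r s δ d p = 0 := by
    refine Finset.sum_involution
      (fun p _ => if (d (false, p.2)).1 = false then (p.1, (d (false, p.2)).2)
        else ((d (false, p.1)).2, p.2)) ?_ ?_ ?_ ?_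
    · -- sums to zero
      intro p hp
      simp only [Finset.mem_filter, Finset.mem_univ, true_and] at hp
      obtain ⟨⟨hp12, hnVV⟩, hnSS⟩ := hp
      try dsimp only
      by_cases hbh : (d (false, p.2)).1 = false
      · rw [if_pos hbh]
        exact cancel_term hinv hne hside p.1 p.2 hp12 hnSS hbh
      · have hah : (d (false, p.1)).1 = false := by
          by_contra h
          rw [Bool.not_eq_false] at h
          rw [Bool.not_eq_false] at hbh
          exact hnVV ⟨h, hbh⟩
        rw [if_neg hbh]
        have hmain := cancel_term (δ := δ) hinv hne hside p.2 p.1 hp12.symm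
          (fun h => hnSS (by rw [← h, hinv])) hah
        rw [WLt_symm d p.1 p.2, WLt_symm d ((d (false, p.1)).2) p.2] at hmain
        exact hmain
    · -- g ≠ id on nonzero terms
      intro p hp _
      simp only [Finset.mem_filter, Finset.mem_univ, true_and] at hp
      obtain ⟨⟨hp12, hnVV⟩, hnSS⟩ := hp
      try dsimp only
      by_cases hbh : (d (false, p.2)).1 = false
      · rw [if_pos hbh]
        intro h
        apply hne (false, p.2)
        have h2 : (d (false, p.2)).2 = p.2 := congrArg Prod.snd h
        rw [eta_of_fst hbh, h2]
      · have hah : (d (false, p.1)).1 = false := by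
          by_contra h
          rw [Bool.not_eq_false] at h
          rw [Bool.not_eq_false] at hbh
          exact hnVV ⟨h, hbh⟩
        rw [if_neg hbh]
        intro h
        apply hne (false, p.1)
        have h2 : (d (false, p.1)).2 = p.1 := congrArg Prod.fst h
        rw [eta_of_fst hah, h2]
    · -- g maps into the set
      intro p hp
      simp only [Finset.mem_filter, Finset.mem_univ, true_and] at hp ⊢
      obtain ⟨⟨hp12, hnVV⟩, hnSS⟩ := hp
      try dsimp only
      by_cases hbh : (d (false, p.2)).1 = false
      · rw [if_pos hbh]
        have hB : d (false, p.2) = (false, (d (false, p.2)).2) := eta_of_fst hbh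
        have hC : d (false, (d (false, p.2)).2) = (false, p.2) := by rw [← hB, hinv]
        refine ⟨⟨?_, ?_⟩, ?_⟩
        · intro h
          exact hnSS (by rw [h]; exact hC)
        · rintro ⟨-, h2⟩
          rw [hC] at h2
          simp at h2
        · intro h
          have h2 : d (false, (d (false, p.2)).2) = (false, p.1) := by rw [← h, hinv]
          rw [hC] at h2
          exact hp12 (congrArg Prod.snd h2).symm
      · have hah : (d (false, p.1)).1 = false := by
          by_contra h
          rw [Bool.not_eq_false] at h
          rw [Bool.not_eq_false] at hbh
          exact hnVV ⟨h, hbh⟩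
        rw [if_neg hbh]
        have hA : d (false, p.1) = (false, (d (false, p.1)).2) := eta_of_fst hah
        have hC : d (false, (d (false, p.1)).2) = (false, p.1) := by rw [← hA, hinv]
        refine ⟨⟨?_, ?_⟩, ?_⟩
        · intro h
          exact hnSS (by rw [← h]; exact hA)
        · rintro ⟨h1, -⟩
          rw [hC] at h1
          simp at h1
        · intro h
          rw [hC] at h
          exact hp12 (congrArg Prod.snd h)
    · -- g is an involution
      intro p hp
      simp only [Finset.mem_filter, Finset.mem_univ, true_and] at hp
      obtain ⟨⟨hp12, hnVV⟩, hnSS⟩ := hp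
      try dsimp only
      by_cases hbh : (d (false, p.2)).1 = false
      · have hB : d (false, p.2) = (false, (d (false, p.2)).2) := eta_of_fst hbh
        have hC : d (false, (d (false, p.2)).2) = (false, p.2) := by rw [← hB, hinv]
        rw [if_pos hbh]
        try dsimp only
        rw [if_pos (by rw [hC]), hC]
      · have hah : (d (false, p.1)).1 = false := by
          by_contra h
          rw [Bool.not_eq_false] at h
          rw [Bool.not_eq_false] at hbh
          exact hnVV ⟨h, hbh⟩
        have hA : d (false, p.1) = (false, (d (false, p.1)).2) := eta_of_fst hah
        have hC : d (false, (d (false, p.1)).2) = (false, p.1) := by rw [← hA, hinv]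
        rw [if_neg hbh]
        try dsimp only
        rw [if_neg hbh, hC]
  rw [hzero, add_zero]
  have hconst : ∀ p ∈ ((Finset.univ.filter (fun p : Fin (r + s) × Fin (r + s) => p.1 ≠ p.2)).filter
        (fun p => ¬((d (false, p.1)).1 = true ∧ (d (false, p.2)).1 = true))).filter
        (fun p => d (false, p.1) = (false, p.2)), WLt r s δ d p = (-δ) • Finsupp.single d 1 := by
    intro p hp
    simp only [Finset.mem_filter, Finset.mem_univ, true_and] at hp
    obtain ⟨⟨hp12, hnVV⟩, hSS⟩ := hp
    have hc : ¬(((p.1 : Fin (r + s)) : ℕ) < r ↔ ((p.2 : Fin (r + s)) : ℕ) < r) := by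
      have h2 := (hside false p.1).2 (by rw [hSS])
      rw [hSS] at h2
      exact fun h => h2 h.symm
    simp only [WLt]
    rw [if_neg hc, circles_one_left hc hinv hSS, comp_cross_left hc hinv hne,
      bsurg_self hinv hp12 hSS, pow_one, neg_one_mul]
  rw [Finset.sum_congr rfl hconst, Finset.sum_const]
  congr 1
  refine Finset.card_nbij' (fun p => p.1) (fun i => (i, (d (false, i)).2)) ?_ ?_ ?_ ?_
  · intro p hp
    simp only [Finset.mem_coe, Finset.mem_filter, Finset.mem_univ, true_and] at hp ⊢
    obtain ⟨⟨hp12, hnVV⟩, hSS⟩ := hp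
    rw [hSS]
  · intro i hi
    simp only [Finset.mem_coe, Finset.mem_filter, Finset.mem_univ, true_and] at hi ⊢
    refine ⟨⟨?_, ?_⟩, eta_of_fst hi⟩
    · intro h
      exact hne (false, i) (by rw [eta_of_fst hi, ← h])
    · rintro ⟨h1, -⟩
      rw [hi] at h1
      simp at h1
  · intro p hp
    simp only [Finset.mem_coe, Finset.mem_filter, Finset.mem_univ, true_and] at hp
    obtain ⟨⟨hp12, hnVV⟩, hSS⟩ := hp
    show ((p.1, (d (false, p.1)).2) : Fin (r + s) × Fin (r + s)) = p
    rw [hSS]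
  · intro i hi
    rfl

lemma pieceB_right {d : WBVertex (r + s) → WBVertex (r + s)}
    (hinv : ∀ v, d (d v) = v) (hne : ∀ v, d v ≠ v)
    (hside : ∀ (b : Bool) (i : Fin (r + s)),
      ((d (b, i)).1 ≠ b → (((d (b, i)).2 : ℕ) < r ↔ (i : ℕ) < r)) ∧
      ((d (b, i)).1 = b → ¬(((d (b, i)).2 : ℕ) < r ↔ (i : ℕ) < r))) :
    ∑ p ∈ (Finset.univ.filter (fun p : Fin (r + s) × Fin (r + s) => p.1 ≠ p.2)).filter
        (fun p => ¬((d (true, p.1)).1 = false ∧ (d (true, p.2)).1 = false)), WRt r s δ d p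
      = (Finset.univ.filter (fun i : Fin (r + s) => (d (true, i)).1 = true)).card •
          ((-δ) • Finsupp.single d (1 : ℂ)) := by
  rw [← Finset.sum_filter_add_sum_filter_not
    (((Finset.univ.filter (fun p : Fin (r + s) × Fin (r + s) => p.1 ≠ p.2)).filter
        (fun p => ¬((d (true, p.1)).1 = false ∧ (d (true, p.2)).1 = false))))
    (fun p => d (true, p.1) = (true, p.2)) (WRt r s δ d)]
  have hzero : ∑ p ∈ ((Finset.univ.filter (fun p : Fin (r + s) × Fin (r + s) => p.1 ≠ p.2)).filter
        (fun p => ¬((d (true, p.1)).1 = false ∧ (d (true, p.2)).1 = false))).filter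
        (fun p => ¬ d (true, p.1) = (true, p.2)), WRt r s δ d p = 0 := by
    refine Finset.sum_involution
      (fun p _ => if (d (true, p.2)).1 = true then (p.1, (d (true, p.2)).2)
        else ((d (true, p.1)).2, p.2)) ?_ ?_ ?_ ?_
    · -- sums to zero
      intro p hp
      simp only [Finset.mem_filter, Finset.mem_univ, true_and] at hp
      obtain ⟨⟨hp12, hnVV⟩, hnSS⟩ := hp
      try dsimp only
      by_cases hbh : (d (true, p.2)).1 = true
      · rw [if_pos hbh]
        exact cancel_term_top hinv hne hside p.1 p.2 hp12 hnSS hbh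
      · have hah : (d (true, p.1)).1 = true := by
          by_contra h
          rw [Bool.not_eq_true] at h
          rw [Bool.not_eq_true] at hbh
          exact hnVV ⟨h, hbh⟩
        rw [if_neg hbh]
        have hmain := cancel_term_top (δ := δ) hinv hne hside p.2 p.1 hp12.symm
          (fun h => hnSS (by rw [← h, hinv])) hah
        rw [WRt_symm d p.1 p.2, WRt_symm d ((d (true, p.1)).2) p.2] at hmain
        exact hmain
    · -- g ≠ id on nonzero terms
      intro p hp _
      simp only [Finset.mem_filter, Finset.mem_univ, true_and] at hp
      obtain ⟨⟨hp12, hnVV⟩, hnSS⟩ := hp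
      try dsimp only
      by_cases hbh : (d (true, p.2)).1 = true
      · rw [if_pos hbh]
        intro h
        apply hne (true, p.2)
        have h2 : (d (true, p.2)).2 = p.2 := congrArg Prod.snd h
        rw [eta_of_fst hbh, h2]
      · have hah : (d (true, p.1)).1 = true := by
          by_contra h
          rw [Bool.not_eq_true] at h
          rw [Bool.not_eq_true] at hbh
          exact hnVV ⟨h, hbh⟩
        rw [if_neg hbh]
        intro h
        apply hne (true, p.1)
        have h2 : (d (true, p.1)).2 = p.1 := congrArg Prod.fst h
        rw [eta_of_fst hah, h2]
    · -- g maps into the set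
      intro p hp
      simp only [Finset.mem_filter, Finset.mem_univ, true_and] at hp ⊢
      obtain ⟨⟨hp12, hnVV⟩, hnSS⟩ := hp
      try dsimp only
      by_cases hbh : (d (true, p.2)).1 = true
      · rw [if_pos hbh]
        have hB : d (true, p.2) = (true, (d (true, p.2)).2) := eta_of_fst hbh
        have hC : d (true, (d (true, p.2)).2) = (true, p.2) := by rw [← hB, hinv]
        refine ⟨⟨?_, ?_⟩, ?_⟩
        · intro h
          exact hnSS (by rw [h]; exact hC)
        · rintro ⟨-, h2⟩
          rw [hC] at h2
          simp at h2
        · intro h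
          have h2 : d (true, (d (true, p.2)).2) = (true, p.1) := by rw [← h, hinv]
          rw [hC] at h2
          exact hp12 (congrArg Prod.snd h2).symm
      · have hah : (d (true, p.1)).1 = true := by
          by_contra h
          rw [Bool.not_eq_true] at h
          rw [Bool.not_eq_true] at hbh
          exact hnVV ⟨h, hbh⟩
        rw [if_neg hbh]
        have hA : d (true, p.1) = (true, (d (true, p.1)).2) := eta_of_fst hah
        have hC : d (true, (d (true, p.1)).2) = (true, p.1) := by rw [← hA, hinv]
        refine ⟨⟨?_, ?_⟩, ?_⟩
        · intro h
          exact hnSS (by rw [← h]; exact hA)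
        · rintro ⟨h1, -⟩
          rw [hC] at h1
          simp at h1
        · intro h
          rw [hC] at h
          exact hp12 (congrArg Prod.snd h)
    · -- g is an involution
      intro p hp
      simp only [Finset.mem_filter, Finset.mem_univ, true_and] at hp
      obtain ⟨⟨hp12, hnVV⟩, hnSS⟩ := hp
      try dsimp only
      by_cases hbh : (d (true, p.2)).1 = true
      · have hB : d (true, p.2) = (true, (d (true, p.2)).2) := eta_of_fst hbh
        have hC : d (true, (d (true, p.2)).2) = (true, p.2) := by rw [← hB, hinv]
        rw [if_pos hbh]
        try dsimp only
        rw [if_pos (by rw [hC]), hC]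
      · have hah : (d (true, p.1)).1 = true := by
          by_contra h
          rw [Bool.not_eq_true] at h
          rw [Bool.not_eq_true] at hbh
          exact hnVV ⟨h, hbh⟩
        have hA : d (true, p.1) = (true, (d (true, p.1)).2) := eta_of_fst hah
        have hC : d (true, (d (true, p.1)).2) = (true, p.1) := by rw [← hA, hinv]
        rw [if_neg hbh]
        try dsimp only
        rw [if_neg hbh, hC]
  rw [hzero, add_zero]
  have hconst : ∀ p ∈ ((Finset.univ.filter (fun p : Fin (r + s) × Fin (r + s) => p.1 ≠ p.2)).filter
        (fun p => ¬((d (true, p.1)).1 = false ∧ (d (true, p.2)).1 = false))).filter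
        (fun p => d (true, p.1) = (true, p.2)), WRt r s δ d p = (-δ) • Finsupp.single d 1 := by
    intro p hp
    simp only [Finset.mem_filter, Finset.mem_univ, true_and] at hp
    obtain ⟨⟨hp12, hnVV⟩, hSS⟩ := hp
    have hc : ¬(((p.1 : Fin (r + s)) : ℕ) < r ↔ ((p.2 : Fin (r + s)) : ℕ) < r) := by
      have h2 := (hside true p.1).2 (by rw [hSS])
      rw [hSS] at h2
      exact fun h => h2 h.symm
    simp only [WRt]
    rw [if_neg hc, circles_one_right hc hinv hSS, comp_cross_right hc hinv hne,
      tsurg_self hinv hp12 hSS, pow_one, neg_one_mul]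
  rw [Finset.sum_congr rfl hconst, Finset.sum_const]
  congr 1
  refine Finset.card_nbij' (fun p => p.1) (fun i => (i, (d (true, i)).2)) ?_ ?_ ?_ ?_
  · intro p hp
    simp only [Finset.mem_coe, Finset.mem_filter, Finset.mem_univ, true_and] at hp ⊢
    obtain ⟨⟨hp12, hnVV⟩, hSS⟩ := hp
    rw [hSS]
  · intro i hi
    simp only [Finset.mem_coe, Finset.mem_filter, Finset.mem_univ, true_and] at hi ⊢
    refine ⟨⟨?_, ?_⟩, eta_of_fst hi⟩
    · intro h
      exact hne (true, i) (by rw [eta_of_fst hi, ← h])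
    · rintro ⟨h1, -⟩
      rw [hi] at h1
      simp at h1
  · intro p hp
    simp only [Finset.mem_coe, Finset.mem_filter, Finset.mem_univ, true_and] at hp
    obtain ⟨⟨hp12, hnVV⟩, hSS⟩ := hp
    show ((p.1, (d (true, p.1)).2) : Fin (r + s) × Fin (r + s)) = p
    rw [hSS]
  · intro i hi
    rfl


end PieceB
section Final

lemma wbMul_smul_left {n : ℕ} {δ : ℂ} (c : ℂ) (x y : (WBVertex n → WBVertex n) →₀ ℂ) :
    wbMul n δ (c • x) y = c • wbMul n δ x y := by
  unfold wbMul
  rw [Finsupp.sum_smul_index (fun f => by simp), Finsupp.smul_sum]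
  congr 1
  funext f a
  rw [Finsupp.smul_sum]
  congr 1
  funext g b
  rw [smul_smul]
  congr 1
  ring

lemma key_single (r s : ℕ) (δ : ℂ) (d : WBVertex (r + s) → WBVertex (r + s))
    (hd : IsWalledBrauerDiagram r s d) :
    wbMul (r + s) δ (zElt r s) (Finsupp.single d 1)
      = wbMul (r + s) δ (Finsupp.single d 1) (zElt r s) := by
  obtain ⟨hinv, hne, hside⟩ := hd
  rw [lhs_repr, rhs_repr]
  have hmain :
      ∑ p ∈ Finset.univ.filter (fun p : Fin (r + s) × Fin (r + s) => p.1 ≠ p.2), WLt r s δ d p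
        = ∑ p ∈ Finset.univ.filter (fun p : Fin (r + s) × Fin (r + s) => p.1 ≠ p.2),
            WRt r s δ d p := by
    rw [← Finset.sum_filter_add_sum_filter_not
        (Finset.univ.filter (fun p : Fin (r + s) × Fin (r + s) => p.1 ≠ p.2))
        (fun p => (d (false, p.1)).1 = true ∧ (d (false, p.2)).1 = true) (WLt r s δ d),
      ← Finset.sum_filter_add_sum_filter_not
        (Finset.univ.filter (fun p : Fin (r + s) × Fin (r + s) => p.1 ≠ p.2))
        (fun p => (d (true, p.1)).1 = false ∧ (d (true, p.2)).1 = false) (WRt r s δ d),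
      pieceA hinv hne hside, pieceB_left hinv hne hside, pieceB_right hinv hne hside,
      card_horiz_eq hinv]
  have h2 := (sum_offdiag_eq_two (WLt r s δ d) (fun a b => WLt_symm d a b)).symm.trans
    (hmain.trans (sum_offdiag_eq_two (WRt r s δ d) (fun a b => WRt_symm d a b)))
  ext w
  have h3 := DFunLike.congr_fun h2 w
  simp only [Finsupp.add_apply] at h3
  rw [← two_mul, ← two_mul] at h3
  exact mul_left_cancel₀ (two_ne_zero) h3

end Final

/-- `z_{r,s}` is central in `B_{r,s}(δ)` (the span of the walled
Brauer diagrams, with multiplication `wbMul`). -/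
theorem zElt_central (r s : ℕ) (δ : ℂ)
    (y : (WBVertex (r + s) → WBVertex (r + s)) →₀ ℂ)
    (hy : y ∈ Submodule.span ℂ {x : (WBVertex (r + s) → WBVertex (r + s)) →₀ ℂ |
      ∃ d, IsWalledBrauerDiagram r s d ∧ x = Finsupp.single d (1 : ℂ)}) :
    wbMul (r + s) δ (zElt r s) y = wbMul (r + s) δ y (zElt r s) := by
  induction hy using Submodule.span_induction with
  | mem x hx =>
      obtain ⟨d, hd, rfl⟩ := hx
      exact key_single r s δ d hd
  | zero => rw [wbMul_zero_right, wbMul_zero_left]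
  | add x y hx hy ihx ihy => rw [wbMul_add_right, wbMul_add_left, ihx, ihy]
  | smul c x hx ih => rw [wbMul_smul_right, wbMul_smul_left, ih]
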